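/- arXiv:1506.08520 — 2 statements merged into one kernel-verified Lean document; each statement's English description precedes it below -/
import Mathlib

section
/- Let (η, ϕ) be a smooth solution of the three-dimensional water-wave system on [0,T]. Then ∫₀ᵀ∬_Q (∂ₜη)·(x·∇ψ) dx dt = P − (1/2)∫₀ᵀ∭_{Ω(t)} |∇_{x,y}ϕ|² dy dx dt + ∫₀ᵀ∬_Q (x·∇η − η)·(∂ₜψ + gη) dx dt, where P := (1/2)∫₀ᵀ [ L₁∫₀^{L₂}∫₋ₕ^{η(t,L₁,x₂)} |∇_{x,y}ϕ(t,L₁,x₂,y)|² dy dx₂ + L₂∫₀^{L₁}∫₋ₕ^{η(t,x₁,L₂)} |∇_{x,y}ϕ(t,x₁,L₂,y)|² dy dx₁ + h∬_Q |∇_{x,y}ϕ(t,x,−h)|² dx ] dt. -/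
open Real Set MeasureTheory

noncomputable section

/-- `∂_{x₁}ϕ(t,x₁,x₂,y)` -/
def phiX1 (ϕ : ℝ → ℝ → ℝ → ℝ → ℝ) (t x₁ x₂ y : ℝ) : ℝ := deriv (fun s => ϕ t s x₂ y) x₁

/-- `∂_{x₂}ϕ(t,x₁,x₂,y)` -/
def phiX2 (ϕ : ℝ → ℝ → ℝ → ℝ → ℝ) (t x₁ x₂ y : ℝ) : ℝ := deriv (fun s => ϕ t x₁ s y) x₂

/-- `∂_yϕ(t,x₁,x₂,y)` -/
def phiY3 (ϕ : ℝ → ℝ → ℝ → ℝ → ℝ) (t x₁ x₂ y : ℝ) : ℝ := deriv (fun s => ϕ t x₁ x₂ s) y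

/-- `∂ₜϕ(t,x₁,x₂,y)` -/
def phiT3 (ϕ : ℝ → ℝ → ℝ → ℝ → ℝ) (t x₁ x₂ y : ℝ) : ℝ := deriv (fun s => ϕ s x₁ x₂ y) t

/-- `|∇_{x,y}ϕ|²(t,x₁,x₂,y)` -/
def gradSq3 (ϕ : ℝ → ℝ → ℝ → ℝ → ℝ) (t x₁ x₂ y : ℝ) : ℝ :=
  (phiX1 ϕ t x₁ x₂ y) ^ 2 + (phiX2 ϕ t x₁ x₂ y) ^ 2 + (phiY3 ϕ t x₁ x₂ y) ^ 2

/-- `|∇ₓϕ|²(t,x₁,x₂,y)` (horizontal gradient) -/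
def gradXSq3 (ϕ : ℝ → ℝ → ℝ → ℝ → ℝ) (t x₁ x₂ y : ℝ) : ℝ :=
  (phiX1 ϕ t x₁ x₂ y) ^ 2 + (phiX2 ϕ t x₁ x₂ y) ^ 2

/-- `∂_{x₁}η(t,x₁,x₂)` -/
def etaX1 (η : ℝ → ℝ → ℝ → ℝ) (t x₁ x₂ : ℝ) : ℝ := deriv (fun s => η t s x₂) x₁

/-- `∂_{x₂}η(t,x₁,x₂)` -/
def etaX2 (η : ℝ → ℝ → ℝ → ℝ) (t x₁ x₂ : ℝ) : ℝ := deriv (fun s => η t x₁ s) x₂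

/-- `∂ₜη(t,x₁,x₂)` -/
def etaT3 (η : ℝ → ℝ → ℝ → ℝ) (t x₁ x₂ : ℝ) : ℝ := deriv (fun s => η s x₁ x₂) t

/-- the trace `ψ(t,x) = ϕ(t,x,η(t,x))` -/
def psi3 (η : ℝ → ℝ → ℝ → ℝ) (ϕ : ℝ → ℝ → ℝ → ℝ → ℝ) (t x₁ x₂ : ℝ) : ℝ :=
  ϕ t x₁ x₂ (η t x₁ x₂)

/-- `∂ₜψ(t,x₁,x₂)` -/
def psi3T (η : ℝ → ℝ → ℝ → ℝ) (ϕ : ℝ → ℝ → ℝ → ℝ → ℝ) (t x₁ x₂ : ℝ) : ℝ :=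
  deriv (fun s => psi3 η ϕ s x₁ x₂) t

/-- `∂_{x₁}ψ(t,x₁,x₂)` -/
def psi3X1 (η : ℝ → ℝ → ℝ → ℝ) (ϕ : ℝ → ℝ → ℝ → ℝ → ℝ) (t x₁ x₂ : ℝ) : ℝ :=
  deriv (fun s => psi3 η ϕ t s x₂) x₁

/-- `∂_{x₂}ψ(t,x₁,x₂)` -/
def psi3X2 (η : ℝ → ℝ → ℝ → ℝ) (ϕ : ℝ → ℝ → ℝ → ℝ → ℝ) (t x₁ x₂ : ℝ) : ℝ :=
  deriv (fun s => psi3 η ϕ t x₁ s) x₂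

/-- `Θ(t,x) = -η ∂ₜψ - (g/2) η²` -/
def Theta3 (g : ℝ) (η : ℝ → ℝ → ℝ → ℝ) (ϕ : ℝ → ℝ → ℝ → ℝ → ℝ) (t x₁ x₂ : ℝ) : ℝ :=
  -(η t x₁ x₂) * psi3T η ϕ t x₁ x₂ - g / 2 * (η t x₁ x₂) ^ 2

/-- the energy `𝓗(t)` -/
def energy3D (L₁ L₂ h g : ℝ) (η : ℝ → ℝ → ℝ → ℝ) (ϕ : ℝ → ℝ → ℝ → ℝ → ℝ) (t : ℝ) : ℝ :=
  g / 2 * (∫ x₁ in (0:ℝ)..L₁, ∫ x₂ in (0:ℝ)..L₂, (η t x₁ x₂) ^ 2)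
    + 1 / 2 * ∫ x₁ in (0:ℝ)..L₁, ∫ x₂ in (0:ℝ)..L₂, ∫ y in (-h)..(η t x₁ x₂),
        gradSq3 ϕ t x₁ x₂ y

/-- the boundary observation `𝓑(T)` -/
def bigB (L₁ L₂ g T : ℝ) (η : ℝ → ℝ → ℝ → ℝ) (ϕ : ℝ → ℝ → ℝ → ℝ → ℝ) : ℝ :=
  ∫ t in (0:ℝ)..T,
    (L₁ * (∫ x₂ in (0:ℝ)..L₂, Theta3 g η ϕ t L₁ x₂)
      + L₂ * ∫ x₁ in (0:ℝ)..L₁, Theta3 g η ϕ t x₁ L₂)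

/-- the positive boundary term `P` -/
def bigP (L₁ L₂ h T : ℝ) (η : ℝ → ℝ → ℝ → ℝ) (ϕ : ℝ → ℝ → ℝ → ℝ → ℝ) : ℝ :=
  1 / 2 * ∫ t in (0:ℝ)..T,
    (L₁ * (∫ x₂ in (0:ℝ)..L₂, ∫ y in (-h)..(η t L₁ x₂), gradSq3 ϕ t L₁ x₂ y)
      + L₂ * (∫ x₁ in (0:ℝ)..L₁, ∫ y in (-h)..(η t x₁ L₂), gradSq3 ϕ t x₁ L₂ y)
      + h * ∫ x₁ in (0:ℝ)..L₁, ∫ x₂ in (0:ℝ)..L₂, gradSq3 ϕ t x₁ x₂ (-h))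

/-- A smooth solution of the three-dimensional water-wave system on `[0,T]`,
in the tank over `Q = [0,L₁] × [0,L₂]`. -/
structure IsWW3D (L₁ L₂ h g T : ℝ) (η : ℝ → ℝ → ℝ → ℝ)
    (ϕ : ℝ → ℝ → ℝ → ℝ → ℝ) : Prop where
  smooth_eta : ContDiff ℝ (⊤ : ℕ∞) (fun p : ℝ × ℝ × ℝ => η p.1 p.2.1 p.2.2)
  smooth_phi : ContDiff ℝ (⊤ : ℕ∞) (fun p : ℝ × ℝ × ℝ × ℝ => ϕ p.1 p.2.1 p.2.2.1 p.2.2.2)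
  eta_lower : ∀ t ∈ Icc (0:ℝ) T, ∀ x₁ ∈ Icc (0:ℝ) L₁, ∀ x₂ ∈ Icc (0:ℝ) L₂,
    -h / 2 ≤ η t x₁ x₂
  eta_mean : ∀ t ∈ Icc (0:ℝ) T,
    (∫ x₁ in (0:ℝ)..L₁, ∫ x₂ in (0:ℝ)..L₂, η t x₁ x₂) = 0
  laplace : ∀ t ∈ Icc (0:ℝ) T, ∀ x₁ ∈ Icc (0:ℝ) L₁, ∀ x₂ ∈ Icc (0:ℝ) L₂,
    ∀ y ∈ Icc (-h) (η t x₁ x₂),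
      deriv (fun s => phiX1 ϕ t s x₂ y) x₁ + deriv (fun s => phiX2 ϕ t x₁ s y) x₂
        + deriv (fun s => phiY3 ϕ t x₁ x₂ s) y = 0
  bc_x1 : ∀ t ∈ Icc (0:ℝ) T, ∀ x₁ ∈ ({0, L₁} : Set ℝ), ∀ x₂ ∈ Icc (0:ℝ) L₂,
    ∀ y ∈ Icc (-h) (η t x₁ x₂), phiX1 ϕ t x₁ x₂ y = 0
  bc_x2 : ∀ t ∈ Icc (0:ℝ) T, ∀ x₂ ∈ ({0, L₂} : Set ℝ), ∀ x₁ ∈ Icc (0:ℝ) L₁,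
    ∀ y ∈ Icc (-h) (η t x₁ x₂), phiX2 ϕ t x₁ x₂ y = 0
  bc_bottom : ∀ t ∈ Icc (0:ℝ) T, ∀ x₁ ∈ Icc (0:ℝ) L₁, ∀ x₂ ∈ Icc (0:ℝ) L₂,
    phiY3 ϕ t x₁ x₂ (-h) = 0
  kinematic : ∀ t ∈ Icc (0:ℝ) T, ∀ x₁ ∈ Icc (0:ℝ) L₁, ∀ x₂ ∈ Icc (0:ℝ) L₂,
    etaT3 η t x₁ x₂
      = phiY3 ϕ t x₁ x₂ (η t x₁ x₂)
        - (etaX1 η t x₁ x₂ * phiX1 ϕ t x₁ x₂ (η t x₁ x₂)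
            + etaX2 η t x₁ x₂ * phiX2 ϕ t x₁ x₂ (η t x₁ x₂))
  bernoulli : ∀ t ∈ Icc (0:ℝ) T, ∀ x₁ ∈ Icc (0:ℝ) L₁, ∀ x₂ ∈ Icc (0:ℝ) L₂,
    phiT3 ϕ t x₁ x₂ (η t x₁ x₂)
      + 1 / 2 * ((phiX1 ϕ t x₁ x₂ (η t x₁ x₂)) ^ 2
          + (phiX2 ϕ t x₁ x₂ (η t x₁ x₂)) ^ 2 + (phiY3 ϕ t x₁ x₂ (η t x₁ x₂)) ^ 2)
      + g * η t x₁ x₂ = 0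
  etaX1_bc : ∀ t ∈ Icc (0:ℝ) T, ∀ x₁ ∈ ({0, L₁} : Set ℝ), ∀ x₂ ∈ Icc (0:ℝ) L₂,
    etaX1 η t x₁ x₂ = 0
  etaX2_bc : ∀ t ∈ Icc (0:ℝ) T, ∀ x₂ ∈ ({0, L₂} : Set ℝ), ∀ x₁ ∈ Icc (0:ℝ) L₁,
    etaX2 η t x₁ x₂ = 0


namespace WW

variable {E : Type*} [NormedAddCommGroup E] [NormedSpace ℝ E]

lemma contDiff_fderiv_apply {U : E → ℝ} (hU : ContDiff ℝ (⊤:ℕ∞) U) (v : E) :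
    ContDiff ℝ (⊤:ℕ∞) (fun p => fderiv ℝ U p v) :=
  (hU.fderiv_right (m := (⊤:ℕ∞)) (by exact_mod_cast le_top)).clm_apply contDiff_const

lemma fderiv_fderiv_apply {U : E → ℝ} (hU : ContDiff ℝ (⊤:ℕ∞) U) (p v w : E) :
    fderiv ℝ (fun q => fderiv ℝ U q v) p w = fderiv ℝ (fderiv ℝ U) p w v := by
  rw [fderiv_clm_apply ((hU.fderiv_right (m := (⊤:ℕ∞)) (by exact_mod_cast le_top)).differentiable
    (by simp) p) (differentiableAt_const v)]
  simp

lemma schwarz {U : E → ℝ} (hU : ContDiff ℝ (⊤:ℕ∞) U) (p v w : E) :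
    fderiv ℝ (fun q => fderiv ℝ U q v) p w = fderiv ℝ (fun q => fderiv ℝ U q w) p v := by
  rw [fderiv_fderiv_apply hU, fderiv_fderiv_apply hU]
  have h := (hU.contDiffAt (x := p)).isSymmSndFDerivAt
    (n := ((⊤:ℕ∞) : WithTop ℕ∞)) (by rw [minSmoothness_of_isRCLikeNormedField]; exact WithTop.coe_le_coe.mpr le_top)
  exact h w v

abbrev E2 := ℝ × ℝ
abbrev E3 := ℝ × ℝ × ℝ
abbrev E4 := ℝ × ℝ × ℝ × ℝ

/-! partial derivatives as fderiv applications -/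

def qd1 (M : E2 → ℝ) (q : E2) : ℝ := fderiv ℝ M q (1, 0)
def qd2 (M : E2 → ℝ) (q : E2) : ℝ := fderiv ℝ M q (0, 1)

def pd1 (U : E3 → ℝ) (p : E3) : ℝ := fderiv ℝ U p (1, 0, 0)
def pd2 (U : E3 → ℝ) (p : E3) : ℝ := fderiv ℝ U p (0, 1, 0)
def pd3 (U : E3 → ℝ) (p : E3) : ℝ := fderiv ℝ U p (0, 0, 1)

/-! slice HasDerivAt lemmas -/

lemma hasDerivAt_q1 {M : E2 → ℝ} (hM : Differentiable ℝ M) (a b : ℝ) :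
    HasDerivAt (fun s => M (s, b)) (qd1 M (a, b)) a := by
  have h1 : HasDerivAt (fun s : ℝ => ((s, b) : E2)) ((1:ℝ), (0:ℝ)) a := by
    simpa using ((hasDerivAt_id a).prodMk (hasDerivAt_const a b))
  exact ((hM (a, b)).hasFDerivAt.comp_hasDerivAt a h1)

lemma hasDerivAt_q2 {M : E2 → ℝ} (hM : Differentiable ℝ M) (a b : ℝ) :
    HasDerivAt (fun s => M (a, s)) (qd2 M (a, b)) b := by
  have h1 : HasDerivAt (fun s : ℝ => ((a, s) : E2)) ((0:ℝ), (1:ℝ)) b := by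
    simpa using ((hasDerivAt_const b a).prodMk (hasDerivAt_id b))
  exact ((hM (a, b)).hasFDerivAt.comp_hasDerivAt b h1)

lemma hasDerivAt_p1 {U : E3 → ℝ} (hU : Differentiable ℝ U) (a b c : ℝ) :
    HasDerivAt (fun s => U (s, b, c)) (pd1 U (a, b, c)) a := by
  have h1 : HasDerivAt (fun s : ℝ => ((s, b, c) : E3)) ((1:ℝ), (0:ℝ), (0:ℝ)) a := by
    simpa using ((hasDerivAt_id a).prodMk ((hasDerivAt_const a b).prodMk (hasDerivAt_const a c)))
  exact ((hU (a, b, c)).hasFDerivAt.comp_hasDerivAt a h1)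

lemma hasDerivAt_p2 {U : E3 → ℝ} (hU : Differentiable ℝ U) (a b c : ℝ) :
    HasDerivAt (fun s => U (a, s, c)) (pd2 U (a, b, c)) b := by
  have h1 : HasDerivAt (fun s : ℝ => ((a, s, c) : E3)) ((0:ℝ), (1:ℝ), (0:ℝ)) b := by
    simpa using ((hasDerivAt_const b a).prodMk ((hasDerivAt_id b).prodMk (hasDerivAt_const b c)))
  exact ((hU (a, b, c)).hasFDerivAt.comp_hasDerivAt b h1)

lemma hasDerivAt_p3 {U : E3 → ℝ} (hU : Differentiable ℝ U) (a b c : ℝ) :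
    HasDerivAt (fun s => U (a, b, s)) (pd3 U (a, b, c)) c := by
  have h1 : HasDerivAt (fun s : ℝ => ((a, b, s) : E3)) ((0:ℝ), (0:ℝ), (1:ℝ)) c := by
    simpa using ((hasDerivAt_const c a).prodMk ((hasDerivAt_const c b).prodMk (hasDerivAt_id c)))
  exact ((hU (a, b, c)).hasFDerivAt.comp_hasDerivAt c h1)

/-- generic slice along a differentiable curve in `E3` -/
lemma hasDerivAt_along {U : E3 → ℝ} (hU : Differentiable ℝ U)
    {f g k : ℝ → ℝ} {f' g' k' s : ℝ}
    (hf : HasDerivAt f f' s) (hg : HasDerivAt g g' s) (hk : HasDerivAt k k' s) :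
    HasDerivAt (fun r => U (f r, g r, k r))
      (f' * pd1 U (f s, g s, k s) + g' * pd2 U (f s, g s, k s)
        + k' * pd3 U (f s, g s, k s)) s := by
  have h1 : HasDerivAt (fun r : ℝ => ((f r, g r, k r) : E3)) ((f', g', k')) s :=
    hf.prodMk (hg.prodMk hk)
  have h2 := ((hU _).hasFDerivAt.comp_hasDerivAt s h1)
  have h3 : ((f' : ℝ), (g' : ℝ), (k' : ℝ)) = f' • ((1:ℝ),(0:ℝ),(0:ℝ)) + g' • ((0:ℝ),(1:ℝ),(0:ℝ))
      + k' • ((0:ℝ),(0:ℝ),(1:ℝ)) := by simp [Prod.ext_iff]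
  have h4 : fderiv ℝ U (f s, g s, k s) (f', g', k')
      = f' * pd1 U (f s, g s, k s) + g' * pd2 U (f s, g s, k s)
        + k' * pd3 U (f s, g s, k s) := by
    simp only [h3, map_add, _root_.map_smul, smul_eq_mul, pd1, pd2, pd3]
  rwa [h4] at h2

lemma schwarz12 {U : E3 → ℝ} (hU : ContDiff ℝ (⊤:ℕ∞) U) (p : E3) :
    pd1 (pd2 U) p = pd2 (pd1 U) p := schwarz hU p _ _

lemma schwarz13 {U : E3 → ℝ} (hU : ContDiff ℝ (⊤:ℕ∞) U) (p : E3) :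
    pd1 (pd3 U) p = pd3 (pd1 U) p := schwarz hU p _ _

lemma schwarz23 {U : E3 → ℝ} (hU : ContDiff ℝ (⊤:ℕ∞) U) (p : E3) :
    pd2 (pd3 U) p = pd3 (pd2 U) p := schwarz hU p _ _

lemma pd1_contDiff {U : E3 → ℝ} (hU : ContDiff ℝ (⊤:ℕ∞) U) : ContDiff ℝ (⊤:ℕ∞) (pd1 U) :=
  contDiff_fderiv_apply hU _
lemma pd2_contDiff {U : E3 → ℝ} (hU : ContDiff ℝ (⊤:ℕ∞) U) : ContDiff ℝ (⊤:ℕ∞) (pd2 U) :=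
  contDiff_fderiv_apply hU _
lemma pd3_contDiff {U : E3 → ℝ} (hU : ContDiff ℝ (⊤:ℕ∞) U) : ContDiff ℝ (⊤:ℕ∞) (pd3 U) :=
  contDiff_fderiv_apply hU _

end WW

namespace WW

lemma fubini_cont (f : ℝ → ℝ → ℝ) (hf : Continuous fun q : E2 => f q.1 q.2)
    {a b c d : ℝ} (hab : a ≤ b) (hcd : c ≤ d) :
    ∫ x in a..b, ∫ y in c..d, f x y = ∫ y in c..d, ∫ x in a..b, f x y := by
  have hint : IntegrableOn (fun q : E2 => f q.1 q.2) (Ioc a b ×ˢ Ioc c d) := by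
    refine (hf.continuousOn.integrableOn_compact (K := Icc a b ×ˢ Icc c d)
      (isCompact_Icc.prod isCompact_Icc)).mono_set ?_
    exact Set.prod_mono Ioc_subset_Icc_self Ioc_subset_Icc_self
  have hint2 : Integrable (Function.uncurry f)
      ((volume.restrict (Ioc a b)).prod (volume.restrict (Ioc c d))) := by
    rw [Measure.prod_restrict]
    exact hint
  rw [intervalIntegral.integral_of_le hab, intervalIntegral.integral_of_le hcd]
  simp_rw [intervalIntegral.integral_of_le hab, intervalIntegral.integral_of_le hcd]
  exact MeasureTheory.integral_integral_swap hint2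

end WW

namespace WW

/-- flattening substitution: `∫_{c}^{c+w} f = w ∫₀¹ f (c + s w) ds` -/
lemma flatten {f : ℝ → ℝ} (hf : Continuous f) (c w : ℝ) :
    ∫ y in c..(c + w), f y = ∫ s in (0:ℝ)..1, w * f (c + s * w) := by
  have h : ∀ s ∈ uIcc (0:ℝ) 1, HasDerivAt (fun s : ℝ => c + s * w) w s := by
    intro s _
    simpa [mul_comm] using ((hasDerivAt_id s).const_mul w).const_add c
  have := intervalIntegral.integral_comp_smul_deriv h continuousOn_const hf
  simp only [smul_eq_mul, Function.comp] at this
  rw [this]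
  norm_num

end WW

namespace WW

lemma halfA {F : E3 → ℝ} (hF : ContDiff ℝ (⊤:ℕ∞) F) {N : E2 → ℝ} (hN : ContDiff ℝ (⊤:ℕ∞) N)
    {h L : ℝ} (hL : 0 ≤ L) (x₂ : ℝ) :
    (∫ y in (-h)..(N (L, x₂)), F (L, x₂, y)) - (∫ y in (-h)..(N (0, x₂)), F (0, x₂, y))
      = ∫ x₁ in (0:ℝ)..L,
          ((∫ y in (-h)..(N (x₁, x₂)), pd1 F (x₁, x₂, y))
            + qd1 N (x₁, x₂) * F (x₁, x₂, N (x₁, x₂))) := by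
  classical
  set w : ℝ → ℝ := fun x₁ => N (x₁, x₂) + h with hw
  set l : ℝ → ℝ → ℝ := fun x₁ s => -h + s * w x₁ with hl
  set G : ℝ → ℝ → ℝ := fun x₁ s => w x₁ * F (x₁, x₂, l x₁ s) with hG
  set D : ℝ → ℝ → ℝ := fun x₁ s =>
    qd1 N (x₁, x₂) * F (x₁, x₂, l x₁ s)
      + w x₁ * (pd1 F (x₁, x₂, l x₁ s) + s * qd1 N (x₁, x₂) * pd3 F (x₁, x₂, l x₁ s))
    with hD
  have hFc : Continuous F := hF.continuous
  have hNc : Continuous N := hN.continuous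
  have hpd1 : Continuous (pd1 F) := (pd1_contDiff hF).continuous
  have hpd3 : Continuous (pd3 F) := (pd3_contDiff hF).continuous
  have hqd1 : Continuous (qd1 N) := (contDiff_fderiv_apply hN _).continuous
  have hwc : Continuous w := by fun_prop
  have hlc : Continuous fun q : E2 => l q.1 q.2 := by
    simp only [hl]; fun_prop
  have hDc : Continuous fun q : E2 => D q.1 q.2 := by
    simp only [hD]
    apply Continuous.add
    · exact ((hqd1.comp (by fun_prop)).mul (hFc.comp (by fun_prop : Continuous
        (fun q : E2 => ((q.1, x₂, l q.1 q.2) : E3)))))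
    · exact (hwc.comp continuous_fst).mul (((hpd1.comp (by fun_prop : Continuous
        (fun q : E2 => ((q.1, x₂, l q.1 q.2) : E3))))).add
        (((continuous_snd.mul (hqd1.comp (by fun_prop))).mul ((hpd3.comp (by fun_prop : Continuous
        (fun q : E2 => ((q.1, x₂, l q.1 q.2) : E3))))))))
  -- step i : flattening
  have stepi : ∀ x₁ : ℝ, (∫ y in (-h)..(N (x₁, x₂)), F (x₁, x₂, y)) = ∫ s in (0:ℝ)..1, G x₁ s := by
    intro x₁
    have h1 : N (x₁, x₂) = -h + w x₁ := by simp only [hw]; ring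
    rw [h1, flatten (by fun_prop) (-h) (w x₁)]
  -- step ii : derivative in x₁
  have stepii : ∀ s : ℝ, ∀ x₁ : ℝ, HasDerivAt (fun r => G r s) (D x₁ s) x₁ := by
    intro s x₁
    have hwd : HasDerivAt w (qd1 N (x₁, x₂)) x₁ :=
      (hasDerivAt_q1 (hN.differentiable (by simp)) x₁ x₂).add_const h
    have hkd : HasDerivAt (fun r => l r s) (s * qd1 N (x₁, x₂)) x₁ := by
      have := (hwd.const_mul s).const_add (-h)
      simpa [hl, mul_comm] using this
    have hinner : HasDerivAt (fun r => F (r, x₂, l r s))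
        (1 * pd1 F (x₁, x₂, l x₁ s) + 0 * pd2 F (x₁, x₂, l x₁ s)
          + (s * qd1 N (x₁, x₂)) * pd3 F (x₁, x₂, l x₁ s)) x₁ :=
      hasDerivAt_along (hF.differentiable (by simp)) (hasDerivAt_id x₁) (hasDerivAt_const x₁ x₂) hkd
    have := hwd.mul hinner
    refine this.congr_deriv ?_
    simp only [hD]
    ring
  -- step iii : FTC in x₁ for fixed s
  have stepiii : ∀ s : ℝ, (∫ x₁ in (0:ℝ)..L, D x₁ s) = G L s - G 0 s := by
    intro s
    refine intervalIntegral.integral_eq_sub_of_hasDerivAt (fun x _ => stepii s x) ?_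
    exact ((hDc.comp (Continuous.prodMk continuous_id continuous_const)).intervalIntegrable 0 L)
  -- step v : inner s-integral
  have stepv : ∀ x₁ : ℝ, (∫ s in (0:ℝ)..1, D x₁ s)
      = (∫ y in (-h)..(N (x₁, x₂)), pd1 F (x₁, x₂, y))
          + qd1 N (x₁, x₂) * F (x₁, x₂, N (x₁, x₂)) := by
    intro x₁
    have hsplit : ∀ s : ℝ, D x₁ s
        = w x₁ * pd1 F (x₁, x₂, l x₁ s)
          + qd1 N (x₁, x₂) * (F (x₁, x₂, l x₁ s) + s * (w x₁ * pd3 F (x₁, x₂, l x₁ s))) := by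
      intro s; simp only [hD]; ring
    have hint1 : IntervalIntegrable (fun s => w x₁ * pd1 F (x₁, x₂, l x₁ s)) volume 0 1 := by
      apply Continuous.intervalIntegrable; fun_prop
    have hint2 : IntervalIntegrable
        (fun s => qd1 N (x₁, x₂) * (F (x₁, x₂, l x₁ s) + s * (w x₁ * pd3 F (x₁, x₂, l x₁ s))))
        volume 0 1 := by
      apply Continuous.intervalIntegrable; fun_prop
    have e1 : (∫ s in (0:ℝ)..1, w x₁ * pd1 F (x₁, x₂, l x₁ s))
        = ∫ y in (-h)..(N (x₁, x₂)), pd1 F (x₁, x₂, y) := by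
      have h1 : N (x₁, x₂) = -h + w x₁ := by simp only [hw]; ring
      rw [h1, flatten (by fun_prop) (-h) (w x₁)]
    have e2 : (∫ s in (0:ℝ)..1, (F (x₁, x₂, l x₁ s) + s * (w x₁ * pd3 F (x₁, x₂, l x₁ s))))
        = F (x₁, x₂, N (x₁, x₂)) := by
      have hg : ∀ s ∈ uIcc (0:ℝ) 1, HasDerivAt (fun s : ℝ => s * F (x₁, x₂, l x₁ s))
          (F (x₁, x₂, l x₁ s) + s * (w x₁ * pd3 F (x₁, x₂, l x₁ s))) s := by
        intro s _
        have hld : HasDerivAt (fun r : ℝ => l x₁ r) (w x₁) s := by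
          have := ((hasDerivAt_id s).const_mul (w x₁)).const_add (-h)
          simpa [hl, mul_comm] using this
        have hFd : HasDerivAt (fun r : ℝ => F (x₁, x₂, l x₁ r))
            (0 * pd1 F (x₁, x₂, l x₁ s) + 0 * pd2 F (x₁, x₂, l x₁ s)
              + (w x₁) * pd3 F (x₁, x₂, l x₁ s)) s :=
          hasDerivAt_along (hF.differentiable (by simp)) (hasDerivAt_const s x₁) (hasDerivAt_const s x₂) hld
        have := (hasDerivAt_id s).mul hFd
        refine this.congr_deriv ?_
        simp only [id_eq]
        ring
      have := intervalIntegral.integral_eq_sub_of_hasDerivAt hg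
        (by apply Continuous.intervalIntegrable; fun_prop)
      simp only [one_mul, zero_mul, sub_zero] at this
      rw [this]
      have h1 : l x₁ 1 = N (x₁, x₂) := by simp only [hl, hw]; ring
      rw [h1]
    calc (∫ s in (0:ℝ)..1, D x₁ s)
        = ∫ s in (0:ℝ)..1, (w x₁ * pd1 F (x₁, x₂, l x₁ s)
            + qd1 N (x₁, x₂) * (F (x₁, x₂, l x₁ s)
              + s * (w x₁ * pd3 F (x₁, x₂, l x₁ s)))) := by
          exact intervalIntegral.integral_congr (fun s _ => hsplit s)
      _ = (∫ s in (0:ℝ)..1, w x₁ * pd1 F (x₁, x₂, l x₁ s))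
            + ∫ s in (0:ℝ)..1, qd1 N (x₁, x₂) * (F (x₁, x₂, l x₁ s)
              + s * (w x₁ * pd3 F (x₁, x₂, l x₁ s))) :=
          intervalIntegral.integral_add hint1 hint2
      _ = (∫ y in (-h)..(N (x₁, x₂)), pd1 F (x₁, x₂, y))
            + qd1 N (x₁, x₂) * F (x₁, x₂, N (x₁, x₂)) := by
          rw [e1, intervalIntegral.integral_const_mul, e2]
  -- assemble
  have hG1 : IntervalIntegrable (fun s => G L s) volume 0 1 := by
    apply Continuous.intervalIntegrable; fun_prop
  have hG0 : IntervalIntegrable (fun s => G 0 s) volume 0 1 := by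
    apply Continuous.intervalIntegrable; fun_prop
  calc (∫ y in (-h)..(N (L, x₂)), F (L, x₂, y)) - (∫ y in (-h)..(N (0, x₂)), F (0, x₂, y))
      = (∫ s in (0:ℝ)..1, G L s) - ∫ s in (0:ℝ)..1, G 0 s := by rw [stepi L, stepi 0]
    _ = ∫ s in (0:ℝ)..1, (G L s - G 0 s) := (intervalIntegral.integral_sub hG1 hG0).symm
    _ = ∫ s in (0:ℝ)..1, ∫ x₁ in (0:ℝ)..L, D x₁ s :=
        intervalIntegral.integral_congr (fun s _ => (stepiii s).symm)
    _ = ∫ x₁ in (0:ℝ)..L, ∫ s in (0:ℝ)..1, D x₁ s := by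
        exact fubini_cont (fun s x₁ => D x₁ s) (by exact hDc.comp continuous_swap) zero_le_one hL
    _ = ∫ x₁ in (0:ℝ)..L,
          ((∫ y in (-h)..(N (x₁, x₂)), pd1 F (x₁, x₂, y))
            + qd1 N (x₁, x₂) * F (x₁, x₂, N (x₁, x₂))) :=
        intervalIntegral.integral_congr (fun x₁ _ => stepv x₁)

end WW

namespace WW

lemma halfB {F : E3 → ℝ} (hF : ContDiff ℝ (⊤:ℕ∞) F) {N : E2 → ℝ} (hN : ContDiff ℝ (⊤:ℕ∞) N)
    {h L : ℝ} (hL : 0 ≤ L) (x₁ : ℝ) :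
    (∫ y in (-h)..(N (x₁, L)), F (x₁, L, y)) - (∫ y in (-h)..(N (x₁, 0)), F (x₁, 0, y))
      = ∫ x₂ in (0:ℝ)..L,
          ((∫ y in (-h)..(N (x₁, x₂)), pd2 F (x₁, x₂, y))
            + qd2 N (x₁, x₂) * F (x₁, x₂, N (x₁, x₂))) := by
  classical
  set w : ℝ → ℝ := fun x₂ => N (x₁, x₂) + h with hw
  set l : ℝ → ℝ → ℝ := fun x₂ s => -h + s * w x₂ with hl
  set G : ℝ → ℝ → ℝ := fun x₂ s => w x₂ * F (x₁, x₂, l x₂ s) with hG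
  set D : ℝ → ℝ → ℝ := fun x₂ s =>
    qd2 N (x₁, x₂) * F (x₁, x₂, l x₂ s)
      + w x₂ * (pd2 F (x₁, x₂, l x₂ s) + s * qd2 N (x₁, x₂) * pd3 F (x₁, x₂, l x₂ s))
    with hD
  have hFc : Continuous F := hF.continuous
  have hNc : Continuous N := hN.continuous
  have hpd2 : Continuous (pd2 F) := (pd2_contDiff hF).continuous
  have hpd3 : Continuous (pd3 F) := (pd3_contDiff hF).continuous
  have hqd2 : Continuous (qd2 N) := (contDiff_fderiv_apply hN _).continuous
  have hwc : Continuous w := by fun_prop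
  have hlc : Continuous fun q : E2 => l q.1 q.2 := by
    simp only [hl]; fun_prop
  have hDc : Continuous fun q : E2 => D q.1 q.2 := by
    simp only [hD]
    apply Continuous.add
    · exact ((hqd2.comp (by fun_prop)).mul (hFc.comp (by fun_prop : Continuous
        (fun q : E2 => ((x₁, q.1, l q.1 q.2) : E3)))))
    · exact (hwc.comp continuous_fst).mul (((hpd2.comp (by fun_prop : Continuous
        (fun q : E2 => ((x₁, q.1, l q.1 q.2) : E3))))).add
        (((continuous_snd.mul (hqd2.comp (by fun_prop))).mul ((hpd3.comp (by fun_prop : Continuous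
        (fun q : E2 => ((x₁, q.1, l q.1 q.2) : E3))))))))
  have stepi : ∀ x₂ : ℝ, (∫ y in (-h)..(N (x₁, x₂)), F (x₁, x₂, y)) = ∫ s in (0:ℝ)..1, G x₂ s := by
    intro x₂
    have h1 : N (x₁, x₂) = -h + w x₂ := by simp only [hw]; ring
    rw [h1, flatten (by fun_prop) (-h) (w x₂)]
  have stepii : ∀ s : ℝ, ∀ x₂ : ℝ, HasDerivAt (fun r => G r s) (D x₂ s) x₂ := by
    intro s x₂
    have hwd : HasDerivAt w (qd2 N (x₁, x₂)) x₂ :=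
      (hasDerivAt_q2 (hN.differentiable (by simp)) x₁ x₂).add_const h
    have hkd : HasDerivAt (fun r => l r s) (s * qd2 N (x₁, x₂)) x₂ := by
      have := (hwd.const_mul s).const_add (-h)
      simpa [hl, mul_comm] using this
    have hinner : HasDerivAt (fun r => F (x₁, r, l r s))
        (0 * pd1 F (x₁, x₂, l x₂ s) + 1 * pd2 F (x₁, x₂, l x₂ s)
          + (s * qd2 N (x₁, x₂)) * pd3 F (x₁, x₂, l x₂ s)) x₂ :=
      hasDerivAt_along (hF.differentiable (by simp))
        (hasDerivAt_const x₂ x₁) (hasDerivAt_id x₂) hkd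
    have := hwd.mul hinner
    refine this.congr_deriv ?_
    simp only [hD]
    ring
  have stepiii : ∀ s : ℝ, (∫ x₂ in (0:ℝ)..L, D x₂ s) = G L s - G 0 s := by
    intro s
    refine intervalIntegral.integral_eq_sub_of_hasDerivAt (fun x _ => stepii s x) ?_
    exact ((hDc.comp (Continuous.prodMk continuous_id continuous_const)).intervalIntegrable 0 L)
  have stepv : ∀ x₂ : ℝ, (∫ s in (0:ℝ)..1, D x₂ s)
      = (∫ y in (-h)..(N (x₁, x₂)), pd2 F (x₁, x₂, y))
          + qd2 N (x₁, x₂) * F (x₁, x₂, N (x₁, x₂)) := by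
    intro x₂
    have hsplit : ∀ s : ℝ, D x₂ s
        = w x₂ * pd2 F (x₁, x₂, l x₂ s)
          + qd2 N (x₁, x₂) * (F (x₁, x₂, l x₂ s) + s * (w x₂ * pd3 F (x₁, x₂, l x₂ s))) := by
      intro s; simp only [hD]; ring
    have hint1 : IntervalIntegrable (fun s => w x₂ * pd2 F (x₁, x₂, l x₂ s)) volume 0 1 := by
      apply Continuous.intervalIntegrable; fun_prop
    have hint2 : IntervalIntegrable
        (fun s => qd2 N (x₁, x₂) * (F (x₁, x₂, l x₂ s) + s * (w x₂ * pd3 F (x₁, x₂, l x₂ s))))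
        volume 0 1 := by
      apply Continuous.intervalIntegrable; fun_prop
    have e1 : (∫ s in (0:ℝ)..1, w x₂ * pd2 F (x₁, x₂, l x₂ s))
        = ∫ y in (-h)..(N (x₁, x₂)), pd2 F (x₁, x₂, y) := by
      have h1 : N (x₁, x₂) = -h + w x₂ := by simp only [hw]; ring
      rw [h1, flatten (by fun_prop) (-h) (w x₂)]
    have e2 : (∫ s in (0:ℝ)..1, (F (x₁, x₂, l x₂ s) + s * (w x₂ * pd3 F (x₁, x₂, l x₂ s))))
        = F (x₁, x₂, N (x₁, x₂)) := by
      have hg : ∀ s ∈ uIcc (0:ℝ) 1, HasDerivAt (fun s : ℝ => s * F (x₁, x₂, l x₂ s))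
          (F (x₁, x₂, l x₂ s) + s * (w x₂ * pd3 F (x₁, x₂, l x₂ s))) s := by
        intro s _
        have hld : HasDerivAt (fun r : ℝ => l x₂ r) (w x₂) s := by
          have := ((hasDerivAt_id s).const_mul (w x₂)).const_add (-h)
          simpa [hl, mul_comm] using this
        have hFd : HasDerivAt (fun r : ℝ => F (x₁, x₂, l x₂ r))
            (0 * pd1 F (x₁, x₂, l x₂ s) + 0 * pd2 F (x₁, x₂, l x₂ s)
              + (w x₂) * pd3 F (x₁, x₂, l x₂ s)) s :=
          hasDerivAt_along (hF.differentiable (by simp))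
            (hasDerivAt_const s x₁) (hasDerivAt_const s x₂) hld
        have := (hasDerivAt_id s).mul hFd
        refine this.congr_deriv ?_
        simp only [id_eq]
        ring
      have := intervalIntegral.integral_eq_sub_of_hasDerivAt hg
        (by apply Continuous.intervalIntegrable; fun_prop)
      simp only [one_mul, zero_mul, sub_zero] at this
      rw [this]
      have h1 : l x₂ 1 = N (x₁, x₂) := by simp only [hl, hw]; ring
      rw [h1]
    calc (∫ s in (0:ℝ)..1, D x₂ s)
        = ∫ s in (0:ℝ)..1, (w x₂ * pd2 F (x₁, x₂, l x₂ s)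
            + qd2 N (x₁, x₂) * (F (x₁, x₂, l x₂ s)
              + s * (w x₂ * pd3 F (x₁, x₂, l x₂ s)))) := by
          exact intervalIntegral.integral_congr (fun s _ => hsplit s)
      _ = (∫ s in (0:ℝ)..1, w x₂ * pd2 F (x₁, x₂, l x₂ s))
            + ∫ s in (0:ℝ)..1, qd2 N (x₁, x₂) * (F (x₁, x₂, l x₂ s)
              + s * (w x₂ * pd3 F (x₁, x₂, l x₂ s))) :=
          intervalIntegral.integral_add hint1 hint2
      _ = (∫ y in (-h)..(N (x₁, x₂)), pd2 F (x₁, x₂, y))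
            + qd2 N (x₁, x₂) * F (x₁, x₂, N (x₁, x₂)) := by
          rw [e1, intervalIntegral.integral_const_mul, e2]
  have hG1 : IntervalIntegrable (fun s => G L s) volume 0 1 := by
    apply Continuous.intervalIntegrable; fun_prop
  have hG0 : IntervalIntegrable (fun s => G 0 s) volume 0 1 := by
    apply Continuous.intervalIntegrable; fun_prop
  calc (∫ y in (-h)..(N (x₁, L)), F (x₁, L, y)) - (∫ y in (-h)..(N (x₁, 0)), F (x₁, 0, y))
      = (∫ s in (0:ℝ)..1, G L s) - ∫ s in (0:ℝ)..1, G 0 s := by rw [stepi L, stepi 0]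
    _ = ∫ s in (0:ℝ)..1, (G L s - G 0 s) := (intervalIntegral.integral_sub hG1 hG0).symm
    _ = ∫ s in (0:ℝ)..1, ∫ x₂ in (0:ℝ)..L, D x₂ s :=
        intervalIntegral.integral_congr (fun s _ => (stepiii s).symm)
    _ = ∫ x₂ in (0:ℝ)..L, ∫ s in (0:ℝ)..1, D x₂ s := by
        exact fubini_cont (fun s x₂ => D x₂ s) (by exact hDc.comp continuous_swap) zero_le_one hL
    _ = ∫ x₂ in (0:ℝ)..L,
          ((∫ y in (-h)..(N (x₁, x₂)), pd2 F (x₁, x₂, y))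
            + qd2 N (x₁, x₂) * F (x₁, x₂, N (x₁, x₂))) :=
        intervalIntegral.integral_congr (fun x₂ _ => stepv x₂)

/-- vertical FTC -/
lemma vertical {F : E3 → ℝ} (hF : ContDiff ℝ (⊤:ℕ∞) F) (h : ℝ) (x₁ x₂ b : ℝ) :
    (∫ y in (-h)..b, pd3 F (x₁, x₂, y)) = F (x₁, x₂, b) - F (x₁, x₂, -h) := by
  refine intervalIntegral.integral_eq_sub_of_hasDerivAt
    (fun y _ => hasDerivAt_p3 (hF.differentiable (by simp)) x₁ x₂ y) ?_
  exact ((pd3_contDiff hF).continuous.comp (by fun_prop)).intervalIntegrable _ _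

end WW

namespace WW

def Wf (u : E3 → ℝ) (p : E3) : ℝ := (pd1 u p) ^ 2 + (pd2 u p) ^ 2 + (pd3 u p) ^ 2
def Vf (u : E3 → ℝ) (p : E3) : ℝ := p.1 * pd1 u p + p.2.1 * pd2 u p + p.2.2 * pd3 u p
def Ff1 (u : E3 → ℝ) (p : E3) : ℝ := Vf u p * pd1 u p - 1 / 2 * Wf u p * p.1
def Ff2 (u : E3 → ℝ) (p : E3) : ℝ := Vf u p * pd2 u p - 1 / 2 * Wf u p * p.2.1
def Ff3 (u : E3 → ℝ) (p : E3) : ℝ := Vf u p * pd3 u p - 1 / 2 * Wf u p * p.2.2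

variable {u : E3 → ℝ}

lemma Wf_contDiff (hu : ContDiff ℝ (⊤:ℕ∞) u) : ContDiff ℝ (⊤:ℕ∞) (Wf u) := by
  unfold Wf
  exact (((pd1_contDiff hu).pow 2).add ((pd2_contDiff hu).pow 2)).add ((pd3_contDiff hu).pow 2)

lemma Vf_contDiff (hu : ContDiff ℝ (⊤:ℕ∞) u) : ContDiff ℝ (⊤:ℕ∞) (Vf u) := by
  unfold Vf
  exact ((contDiff_fst.mul (pd1_contDiff hu)).add
    ((contDiff_snd.fst.mul (pd2_contDiff hu)))).add (contDiff_snd.snd.mul (pd3_contDiff hu))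

lemma Ff1_contDiff (hu : ContDiff ℝ (⊤:ℕ∞) u) : ContDiff ℝ (⊤:ℕ∞) (Ff1 u) := by
  unfold Ff1
  exact ((Vf_contDiff hu).mul (pd1_contDiff hu)).sub
    ((contDiff_const.mul (Wf_contDiff hu)).mul contDiff_fst)
lemma Ff2_contDiff (hu : ContDiff ℝ (⊤:ℕ∞) u) : ContDiff ℝ (⊤:ℕ∞) (Ff2 u) := by
  unfold Ff2
  exact ((Vf_contDiff hu).mul (pd2_contDiff hu)).sub
    ((contDiff_const.mul (Wf_contDiff hu)).mul contDiff_snd.fst)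
lemma Ff3_contDiff (hu : ContDiff ℝ (⊤:ℕ∞) u) : ContDiff ℝ (⊤:ℕ∞) (Ff3 u) := by
  unfold Ff3
  exact ((Vf_contDiff hu).mul (pd3_contDiff hu)).sub
    ((contDiff_const.mul (Wf_contDiff hu)).mul contDiff_snd.snd)

/-- pointwise divergence of the Pohozaev flux -/
lemma div_flux (hu : ContDiff ℝ (⊤:ℕ∞) u) (p : E3) :
    pd1 (Ff1 u) p + pd2 (Ff2 u) p + pd3 (Ff3 u) p
      = Vf u p * (pd1 (pd1 u) p + pd2 (pd2 u) p + pd3 (pd3 u) p) - 1 / 2 * Wf u p := by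
  obtain ⟨a, b, c⟩ := p
  have hd1 : Differentiable ℝ (pd1 u) :=
    (pd1_contDiff hu).differentiable (by simp)
  have hd2 : Differentiable ℝ (pd2 u) :=
    (pd2_contDiff hu).differentiable (by simp)
  have hd3 : Differentiable ℝ (pd3 u) :=
    (pd3_contDiff hu).differentiable (by simp)
  have hF1d : Differentiable ℝ (Ff1 u) :=
    (Ff1_contDiff hu).differentiable (by simp)
  have hF2d : Differentiable ℝ (Ff2 u) :=
    (Ff2_contDiff hu).differentiable (by simp)
  have hF3d : Differentiable ℝ (Ff3 u) :=
    (Ff3_contDiff hu).differentiable (by simp)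
  -- slice derivatives in direction 1
  have e1 := hasDerivAt_p1 hd1 a b c
  have e2 := hasDerivAt_p1 hd2 a b c
  have e3 := hasDerivAt_p1 hd3 a b c
  have hV1 : HasDerivAt (fun s => s * pd1 u (s,b,c) + b * pd2 u (s,b,c) + c * pd3 u (s,b,c))
      (pd1 u (a,b,c) + a * pd1 (pd1 u) (a,b,c) + b * pd1 (pd2 u) (a,b,c)
        + c * pd1 (pd3 u) (a,b,c)) a := by
    have := (((hasDerivAt_id a).mul e1).add (e2.const_mul b)).add (e3.const_mul c)
    refine this.congr_deriv ?_
    simp only [id_eq]; ring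
  have hW1 : HasDerivAt (fun s => (pd1 u (s,b,c))^2 + (pd2 u (s,b,c))^2 + (pd3 u (s,b,c))^2)
      (2 * pd1 u (a,b,c) * pd1 (pd1 u) (a,b,c) + 2 * pd2 u (a,b,c) * pd1 (pd2 u) (a,b,c)
        + 2 * pd3 u (a,b,c) * pd1 (pd3 u) (a,b,c)) a := by
    have := ((e1.pow 2).add (e2.pow 2)).add (e3.pow 2)
    refine this.congr_deriv ?_
    ring
  have h1 : HasDerivAt (fun s => (s * pd1 u (s,b,c) + b * pd2 u (s,b,c) + c * pd3 u (s,b,c))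
        * pd1 u (s,b,c)
      - 1 / 2 * ((pd1 u (s,b,c))^2 + (pd2 u (s,b,c))^2 + (pd3 u (s,b,c))^2) * s)
      ((pd1 u (a,b,c) + a * pd1 (pd1 u) (a,b,c) + b * pd1 (pd2 u) (a,b,c)
          + c * pd1 (pd3 u) (a,b,c)) * pd1 u (a,b,c)
        + (a * pd1 u (a,b,c) + b * pd2 u (a,b,c) + c * pd3 u (a,b,c)) * pd1 (pd1 u) (a,b,c)
        - a * (pd1 u (a,b,c) * pd1 (pd1 u) (a,b,c) + pd2 u (a,b,c) * pd1 (pd2 u) (a,b,c)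
            + pd3 u (a,b,c) * pd1 (pd3 u) (a,b,c))
        - 1 / 2 * ((pd1 u (a,b,c))^2 + (pd2 u (a,b,c))^2 + (pd3 u (a,b,c))^2)) a := by
    have := (hV1.mul e1).sub ((hW1.const_mul (1/2:ℝ)).mul (hasDerivAt_id a))
    refine this.congr_deriv ?_
    simp only [id_eq]; ring
  have k1 : pd1 (Ff1 u) (a,b,c)
      = (pd1 u (a,b,c) + a * pd1 (pd1 u) (a,b,c) + b * pd1 (pd2 u) (a,b,c)
          + c * pd1 (pd3 u) (a,b,c)) * pd1 u (a,b,c)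
        + (a * pd1 u (a,b,c) + b * pd2 u (a,b,c) + c * pd3 u (a,b,c)) * pd1 (pd1 u) (a,b,c)
        - a * (pd1 u (a,b,c) * pd1 (pd1 u) (a,b,c) + pd2 u (a,b,c) * pd1 (pd2 u) (a,b,c)
            + pd3 u (a,b,c) * pd1 (pd3 u) (a,b,c))
        - 1 / 2 * ((pd1 u (a,b,c))^2 + (pd2 u (a,b,c))^2 + (pd3 u (a,b,c))^2) :=
    (hasDerivAt_p1 hF1d a b c).unique h1
  -- direction 2
  have f1 := hasDerivAt_p2 hd1 a b c
  have f2 := hasDerivAt_p2 hd2 a b c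
  have f3 := hasDerivAt_p2 hd3 a b c
  have hV2 : HasDerivAt (fun s => a * pd1 u (a,s,c) + s * pd2 u (a,s,c) + c * pd3 u (a,s,c))
      (pd2 u (a,b,c) + a * pd2 (pd1 u) (a,b,c) + b * pd2 (pd2 u) (a,b,c)
        + c * pd2 (pd3 u) (a,b,c)) b := by
    have := ((f1.const_mul a).add ((hasDerivAt_id b).mul f2)).add (f3.const_mul c)
    refine this.congr_deriv ?_
    simp only [id_eq]; ring
  have hW2 : HasDerivAt (fun s => (pd1 u (a,s,c))^2 + (pd2 u (a,s,c))^2 + (pd3 u (a,s,c))^2)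
      (2 * pd1 u (a,b,c) * pd2 (pd1 u) (a,b,c) + 2 * pd2 u (a,b,c) * pd2 (pd2 u) (a,b,c)
        + 2 * pd3 u (a,b,c) * pd2 (pd3 u) (a,b,c)) b := by
    have := ((f1.pow 2).add (f2.pow 2)).add (f3.pow 2)
    refine this.congr_deriv ?_
    ring
  have h2 : HasDerivAt (fun s => (a * pd1 u (a,s,c) + s * pd2 u (a,s,c) + c * pd3 u (a,s,c))
        * pd2 u (a,s,c)
      - 1 / 2 * ((pd1 u (a,s,c))^2 + (pd2 u (a,s,c))^2 + (pd3 u (a,s,c))^2) * s)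
      ((pd2 u (a,b,c) + a * pd2 (pd1 u) (a,b,c) + b * pd2 (pd2 u) (a,b,c)
          + c * pd2 (pd3 u) (a,b,c)) * pd2 u (a,b,c)
        + (a * pd1 u (a,b,c) + b * pd2 u (a,b,c) + c * pd3 u (a,b,c)) * pd2 (pd2 u) (a,b,c)
        - b * (pd1 u (a,b,c) * pd2 (pd1 u) (a,b,c) + pd2 u (a,b,c) * pd2 (pd2 u) (a,b,c)
            + pd3 u (a,b,c) * pd2 (pd3 u) (a,b,c))
        - 1 / 2 * ((pd1 u (a,b,c))^2 + (pd2 u (a,b,c))^2 + (pd3 u (a,b,c))^2)) b := by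
    have := (hV2.mul f2).sub ((hW2.const_mul (1/2:ℝ)).mul (hasDerivAt_id b))
    refine this.congr_deriv ?_
    simp only [id_eq]; ring
  have k2 : pd2 (Ff2 u) (a,b,c)
      = (pd2 u (a,b,c) + a * pd2 (pd1 u) (a,b,c) + b * pd2 (pd2 u) (a,b,c)
          + c * pd2 (pd3 u) (a,b,c)) * pd2 u (a,b,c)
        + (a * pd1 u (a,b,c) + b * pd2 u (a,b,c) + c * pd3 u (a,b,c)) * pd2 (pd2 u) (a,b,c)
        - b * (pd1 u (a,b,c) * pd2 (pd1 u) (a,b,c) + pd2 u (a,b,c) * pd2 (pd2 u) (a,b,c)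
            + pd3 u (a,b,c) * pd2 (pd3 u) (a,b,c))
        - 1 / 2 * ((pd1 u (a,b,c))^2 + (pd2 u (a,b,c))^2 + (pd3 u (a,b,c))^2) :=
    (hasDerivAt_p2 hF2d a b c).unique h2
  -- direction 3
  have g1 := hasDerivAt_p3 hd1 a b c
  have g2 := hasDerivAt_p3 hd2 a b c
  have g3 := hasDerivAt_p3 hd3 a b c
  have hV3 : HasDerivAt (fun s => a * pd1 u (a,b,s) + b * pd2 u (a,b,s) + s * pd3 u (a,b,s))
      (pd3 u (a,b,c) + a * pd3 (pd1 u) (a,b,c) + b * pd3 (pd2 u) (a,b,c)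
        + c * pd3 (pd3 u) (a,b,c)) c := by
    have := ((g1.const_mul a).add (g2.const_mul b)).add ((hasDerivAt_id c).mul g3)
    refine this.congr_deriv ?_
    simp only [id_eq]; ring
  have hW3 : HasDerivAt (fun s => (pd1 u (a,b,s))^2 + (pd2 u (a,b,s))^2 + (pd3 u (a,b,s))^2)
      (2 * pd1 u (a,b,c) * pd3 (pd1 u) (a,b,c) + 2 * pd2 u (a,b,c) * pd3 (pd2 u) (a,b,c)
        + 2 * pd3 u (a,b,c) * pd3 (pd3 u) (a,b,c)) c := by
    have := ((g1.pow 2).add (g2.pow 2)).add (g3.pow 2)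
    refine this.congr_deriv ?_
    ring
  have h3 : HasDerivAt (fun s => (a * pd1 u (a,b,s) + b * pd2 u (a,b,s) + s * pd3 u (a,b,s))
        * pd3 u (a,b,s)
      - 1 / 2 * ((pd1 u (a,b,s))^2 + (pd2 u (a,b,s))^2 + (pd3 u (a,b,s))^2) * s)
      ((pd3 u (a,b,c) + a * pd3 (pd1 u) (a,b,c) + b * pd3 (pd2 u) (a,b,c)
          + c * pd3 (pd3 u) (a,b,c)) * pd3 u (a,b,c)
        + (a * pd1 u (a,b,c) + b * pd2 u (a,b,c) + c * pd3 u (a,b,c)) * pd3 (pd3 u) (a,b,c)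
        - c * (pd1 u (a,b,c) * pd3 (pd1 u) (a,b,c) + pd2 u (a,b,c) * pd3 (pd2 u) (a,b,c)
            + pd3 u (a,b,c) * pd3 (pd3 u) (a,b,c))
        - 1 / 2 * ((pd1 u (a,b,c))^2 + (pd2 u (a,b,c))^2 + (pd3 u (a,b,c))^2)) c := by
    have := (hV3.mul g3).sub ((hW3.const_mul (1/2:ℝ)).mul (hasDerivAt_id c))
    refine this.congr_deriv ?_
    simp only [id_eq]; ring
  have k3 : pd3 (Ff3 u) (a,b,c)
      = (pd3 u (a,b,c) + a * pd3 (pd1 u) (a,b,c) + b * pd3 (pd2 u) (a,b,c)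
          + c * pd3 (pd3 u) (a,b,c)) * pd3 u (a,b,c)
        + (a * pd1 u (a,b,c) + b * pd2 u (a,b,c) + c * pd3 u (a,b,c)) * pd3 (pd3 u) (a,b,c)
        - c * (pd1 u (a,b,c) * pd3 (pd1 u) (a,b,c) + pd2 u (a,b,c) * pd3 (pd2 u) (a,b,c)
            + pd3 u (a,b,c) * pd3 (pd3 u) (a,b,c))
        - 1 / 2 * ((pd1 u (a,b,c))^2 + (pd2 u (a,b,c))^2 + (pd3 u (a,b,c))^2) :=
    (hasDerivAt_p3 hF3d a b c).unique h3
  have s12 := schwarz12 hu (a,b,c)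
  have s13 := schwarz13 hu (a,b,c)
  have s23 := schwarz23 hu (a,b,c)
  rw [k1, k2, k3]
  simp only [Vf, Wf]
  rw [s12, s13, s23]
  ring

end WW

namespace WW

def Afun (u : E3 → ℝ) (N : E2 → ℝ) (x₁ x₂ : ℝ) : ℝ :=
  pd3 u (x₁, x₂, N (x₁, x₂))
    - (qd1 N (x₁, x₂) * pd1 u (x₁, x₂, N (x₁, x₂))
        + qd2 N (x₁, x₂) * pd2 u (x₁, x₂, N (x₁, x₂)))

def Psi1 (u : E3 → ℝ) (N : E2 → ℝ) (x₁ x₂ : ℝ) : ℝ :=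
  pd1 u (x₁, x₂, N (x₁, x₂)) + qd1 N (x₁, x₂) * pd3 u (x₁, x₂, N (x₁, x₂))

def Psi2 (u : E3 → ℝ) (N : E2 → ℝ) (x₁ x₂ : ℝ) : ℝ :=
  pd2 u (x₁, x₂, N (x₁, x₂)) + qd2 N (x₁, x₂) * pd3 u (x₁, x₂, N (x₁, x₂))

lemma surface_alg (u : E3 → ℝ) (N : E2 → ℝ) (x₁ x₂ : ℝ) :
    qd1 N (x₁, x₂) * Ff1 u (x₁, x₂, N (x₁, x₂)) + qd2 N (x₁, x₂) * Ff2 u (x₁, x₂, N (x₁, x₂))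
      - Ff3 u (x₁, x₂, N (x₁, x₂))
    = -(Afun u N x₁ x₂ * (x₁ * Psi1 u N x₁ x₂ + x₂ * Psi2 u N x₁ x₂))
      + (x₁ * qd1 N (x₁, x₂) + x₂ * qd2 N (x₁, x₂) - N (x₁, x₂))
        * (Afun u N x₁ x₂ * pd3 u (x₁, x₂, N (x₁, x₂))
            - 1 / 2 * Wf u (x₁, x₂, N (x₁, x₂))) := by
  simp only [Afun, Psi1, Psi2, Ff1, Ff2, Ff3, Vf, Wf]
  ring

end WW

namespace WW

def Pd1 (V : E4 → ℝ) (p : E4) : ℝ := fderiv ℝ V p (1, 0, 0, 0)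
def Pd2 (V : E4 → ℝ) (p : E4) : ℝ := fderiv ℝ V p (0, 1, 0, 0)
def Pd3 (V : E4 → ℝ) (p : E4) : ℝ := fderiv ℝ V p (0, 0, 1, 0)
def Pd4 (V : E4 → ℝ) (p : E4) : ℝ := fderiv ℝ V p (0, 0, 0, 1)

lemma hasDerivAt_P1 {V : E4 → ℝ} (hV : Differentiable ℝ V) (a b c d : ℝ) :
    HasDerivAt (fun s => V (s, b, c, d)) (Pd1 V (a, b, c, d)) a := by
  have h1 : HasDerivAt (fun s : ℝ => ((s, b, c, d) : E4)) ((1:ℝ), (0:ℝ), (0:ℝ), (0:ℝ)) a := by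
    simpa using ((hasDerivAt_id a).prodMk ((hasDerivAt_const a b).prodMk
      ((hasDerivAt_const a c).prodMk (hasDerivAt_const a d))))
  exact ((hV (a, b, c, d)).hasFDerivAt.comp_hasDerivAt a h1)

lemma hasDerivAt_P2 {V : E4 → ℝ} (hV : Differentiable ℝ V) (a b c d : ℝ) :
    HasDerivAt (fun s => V (a, s, c, d)) (Pd2 V (a, b, c, d)) b := by
  have h1 : HasDerivAt (fun s : ℝ => ((a, s, c, d) : E4)) ((0:ℝ), (1:ℝ), (0:ℝ), (0:ℝ)) b := by
    simpa using ((hasDerivAt_const b a).prodMk ((hasDerivAt_id b).prodMk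
      ((hasDerivAt_const b c).prodMk (hasDerivAt_const b d))))
  exact ((hV (a, b, c, d)).hasFDerivAt.comp_hasDerivAt b h1)

lemma hasDerivAt_P3 {V : E4 → ℝ} (hV : Differentiable ℝ V) (a b c d : ℝ) :
    HasDerivAt (fun s => V (a, b, s, d)) (Pd3 V (a, b, c, d)) c := by
  have h1 : HasDerivAt (fun s : ℝ => ((a, b, s, d) : E4)) ((0:ℝ), (0:ℝ), (1:ℝ), (0:ℝ)) c := by
    simpa using ((hasDerivAt_const c a).prodMk ((hasDerivAt_const c b).prodMk
      ((hasDerivAt_id c).prodMk (hasDerivAt_const c d))))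
  exact ((hV (a, b, c, d)).hasFDerivAt.comp_hasDerivAt c h1)

lemma hasDerivAt_P4 {V : E4 → ℝ} (hV : Differentiable ℝ V) (a b c d : ℝ) :
    HasDerivAt (fun s => V (a, b, c, s)) (Pd4 V (a, b, c, d)) d := by
  have h1 : HasDerivAt (fun s : ℝ => ((a, b, c, s) : E4)) ((0:ℝ), (0:ℝ), (0:ℝ), (1:ℝ)) d := by
    simpa using ((hasDerivAt_const d a).prodMk ((hasDerivAt_const d b).prodMk
      ((hasDerivAt_const d c).prodMk (hasDerivAt_id d))))
  exact ((hV (a, b, c, d)).hasFDerivAt.comp_hasDerivAt d h1)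

/-- derivative along a curve in `E4` of the form `s ↦ (s, b, c, k s)` -/
lemma hasDerivAt_along4 {V : E4 → ℝ} (hV : Differentiable ℝ V) {k : ℝ → ℝ} {k' s b c : ℝ}
    (hk : HasDerivAt k k' s) :
    HasDerivAt (fun r => V (r, b, c, k r))
      (Pd1 V (s, b, c, k s) + k' * Pd4 V (s, b, c, k s)) s := by
  have h1 : HasDerivAt (fun r : ℝ => ((r, b, c, k r) : E4)) ((1:ℝ), (0:ℝ), (0:ℝ), k') s :=
    (hasDerivAt_id s).prodMk ((hasDerivAt_const s b).prodMk ((hasDerivAt_const s c).prodMk hk))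
  have h2 := ((hV _).hasFDerivAt.comp_hasDerivAt s h1)
  have h3 : ((1:ℝ), (0:ℝ), (0:ℝ), k') = ((1:ℝ),(0:ℝ),(0:ℝ),(0:ℝ))
      + k' • ((0:ℝ),(0:ℝ),(0:ℝ),(1:ℝ)) := by simp [Prod.ext_iff]
  have h4 : fderiv ℝ V (s, b, c, k s) ((1:ℝ), (0:ℝ), (0:ℝ), k')
      = Pd1 V (s, b, c, k s) + k' * Pd4 V (s, b, c, k s) := by
    simp only [h3, map_add, _root_.map_smul, smul_eq_mul, Pd1, Pd4]
  rwa [h4] at h2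

end WW

namespace WW

variable {X : Type*} [TopologicalSpace X] [FirstCountableTopology X] [LocallyCompactSpace X]

lemma cont_param' {f : X × ℝ → ℝ} (hf : Continuous f) (a₀ b₀ : ℝ) :
    Continuous fun x : X => ∫ s in a₀..b₀, f (x, s) :=
  intervalIntegral.continuous_parametric_intervalIntegral_of_continuous'
    (f := fun x s => f (x, s)) (by exact hf) a₀ b₀

lemma cont_param_end {f : X × ℝ → ℝ} (hf : Continuous f) {e : X → ℝ} (he : Continuous e)
    (a₀ : ℝ) : Continuous fun x : X => ∫ s in a₀..(e x), f (x, s) :=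
  intervalIntegral.continuous_parametric_intervalIntegral_of_continuous
    (f := fun x s => f (x, s)) (by exact hf) he

end WW


namespace WW

lemma cont_param {f : E2 → ℝ} (hf : Continuous f) (a₀ b₀ : ℝ) :
    Continuous fun x₁ => ∫ x₂ in a₀..b₀, f (x₁, x₂) :=
  intervalIntegral.continuous_parametric_intervalIntegral_of_continuous'
    (f := fun a b => f (a, b)) (by exact hf.comp (by fun_prop)) a₀ b₀

end WW

namespace WW

lemma core {L₁ L₂ h : ℝ} (hL₁ : 0 ≤ L₁) (hL₂ : 0 ≤ L₂)
    {u : E3 → ℝ} (hu : ContDiff ℝ (⊤:ℕ∞) u) {N : E2 → ℝ} (hN : ContDiff ℝ (⊤:ℕ∞) N)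
    (hNge : ∀ x₁ ∈ Icc (0:ℝ) L₁, ∀ x₂ ∈ Icc (0:ℝ) L₂, -h ≤ N (x₁, x₂))
    (hlap : ∀ x₁ ∈ Icc (0:ℝ) L₁, ∀ x₂ ∈ Icc (0:ℝ) L₂, ∀ y ∈ Icc (-h) (N (x₁, x₂)),
      pd1 (pd1 u) (x₁, x₂, y) + pd2 (pd2 u) (x₁, x₂, y) + pd3 (pd3 u) (x₁, x₂, y) = 0)
    (hbc1 : ∀ x₁ ∈ ({0, L₁} : Set ℝ), ∀ x₂ ∈ Icc (0:ℝ) L₂, ∀ y ∈ Icc (-h) (N (x₁, x₂)),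
      pd1 u (x₁, x₂, y) = 0)
    (hbc2 : ∀ x₂ ∈ ({0, L₂} : Set ℝ), ∀ x₁ ∈ Icc (0:ℝ) L₁, ∀ y ∈ Icc (-h) (N (x₁, x₂)),
      pd2 u (x₁, x₂, y) = 0)
    (hbot : ∀ x₁ ∈ Icc (0:ℝ) L₁, ∀ x₂ ∈ Icc (0:ℝ) L₂, pd3 u (x₁, x₂, -h) = 0) :
    (∫ x₁ in (0:ℝ)..L₁, ∫ x₂ in (0:ℝ)..L₂,
        Afun u N x₁ x₂ * (x₁ * Psi1 u N x₁ x₂ + x₂ * Psi2 u N x₁ x₂))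
      = 1 / 2 * (L₁ * (∫ x₂ in (0:ℝ)..L₂, ∫ y in (-h)..(N (L₁, x₂)), Wf u (L₁, x₂, y))
          + L₂ * (∫ x₁ in (0:ℝ)..L₁, ∫ y in (-h)..(N (x₁, L₂)), Wf u (x₁, L₂, y))
          + h * ∫ x₁ in (0:ℝ)..L₁, ∫ x₂ in (0:ℝ)..L₂, Wf u (x₁, x₂, -h))
        - 1 / 2 * (∫ x₁ in (0:ℝ)..L₁, ∫ x₂ in (0:ℝ)..L₂,
            ∫ y in (-h)..(N (x₁, x₂)), Wf u (x₁, x₂, y))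
        + ∫ x₁ in (0:ℝ)..L₁, ∫ x₂ in (0:ℝ)..L₂,
            (x₁ * qd1 N (x₁, x₂) + x₂ * qd2 N (x₁, x₂) - N (x₁, x₂))
              * (Afun u N x₁ x₂ * pd3 u (x₁, x₂, N (x₁, x₂))
                  - 1 / 2 * Wf u (x₁, x₂, N (x₁, x₂))) := by
  classical
  have hNc : Continuous N := hN.continuous
  have hWc : Continuous (Wf u) := (Wf_contDiff hu).continuous
  have hF1c : Continuous (Ff1 u) := (Ff1_contDiff hu).continuous
  have hF2c : Continuous (Ff2 u) := (Ff2_contDiff hu).continuous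
  have hF3c : Continuous (Ff3 u) := (Ff3_contDiff hu).continuous
  have hpF1c : Continuous (pd1 (Ff1 u)) := (pd1_contDiff (Ff1_contDiff hu)).continuous
  have hpF2c : Continuous (pd2 (Ff2 u)) := (pd2_contDiff (Ff2_contDiff hu)).continuous
  have hpF3c : Continuous (pd3 (Ff3 u)) := (pd3_contDiff (Ff3_contDiff hu)).continuous
  have hq1c : Continuous (qd1 N) := (contDiff_fderiv_apply hN _).continuous
  have hq2c : Continuous (qd2 N) := (contDiff_fderiv_apply hN _).continuous
  have hu1c : Continuous (pd1 u) := (pd1_contDiff hu).continuous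
  have hu2c : Continuous (pd2 u) := (pd2_contDiff hu).continuous
  have hu3c : Continuous (pd3 u) := (pd3_contDiff hu).continuous
  have hAc : Continuous (fun x : E2 => Afun u N x.1 x.2) := by
    simp only [Afun]; fun_prop
  have hPsi1c : Continuous (fun x : E2 => Psi1 u N x.1 x.2) := by
    simp only [Psi1]; fun_prop
  have hPsi2c : Continuous (fun x : E2 => Psi2 u N x.1 x.2) := by
    simp only [Psi2]; fun_prop
  have hIntW : Continuous (fun x : E2 => ∫ y in (-h)..(N (x.1, x.2)), Wf u (x.1, x.2, y)) := by
    apply intervalIntegral.continuous_parametric_intervalIntegral_of_continuous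
    · exact hWc.comp (by fun_prop)
    · fun_prop
  have hα₁c : Continuous (fun x : E2 =>
      (∫ y in (-h)..(N (x.1, x.2)), pd1 (Ff1 u) (x.1, x.2, y))
        + qd1 N (x.1, x.2) * Ff1 u (x.1, x.2, N (x.1, x.2))) := by
    apply Continuous.add
    · apply intervalIntegral.continuous_parametric_intervalIntegral_of_continuous
      · exact hpF1c.comp (by fun_prop)
      · fun_prop
    · fun_prop
  have hα₂c : Continuous (fun x : E2 =>
      (∫ y in (-h)..(N (x.1, x.2)), pd2 (Ff2 u) (x.1, x.2, y))
        + qd2 N (x.1, x.2) * Ff2 u (x.1, x.2, N (x.1, x.2))) := by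
    apply Continuous.add
    · apply intervalIntegral.continuous_parametric_intervalIntegral_of_continuous
      · exact hpF2c.comp (by fun_prop)
      · fun_prop
    · fun_prop
  have hL₁mem : L₁ ∈ Icc (0:ℝ) L₁ := ⟨hL₁, le_refl _⟩
  have h0mem₁ : (0:ℝ) ∈ Icc (0:ℝ) L₁ := ⟨le_refl _, hL₁⟩
  have hL₂mem : L₂ ∈ Icc (0:ℝ) L₂ := ⟨hL₂, le_refl _⟩
  have h0mem₂ : (0:ℝ) ∈ Icc (0:ℝ) L₂ := ⟨le_refl _, hL₂⟩
  -- Step EqA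
  have EqA : -(1/2) * L₁ * (∫ x₂ in (0:ℝ)..L₂, ∫ y in (-h)..(N (L₁, x₂)), Wf u (L₁, x₂, y))
      = ∫ x₁ in (0:ℝ)..L₁, ∫ x₂ in (0:ℝ)..L₂,
          ((∫ y in (-h)..(N (x₁, x₂)), pd1 (Ff1 u) (x₁, x₂, y))
            + qd1 N (x₁, x₂) * Ff1 u (x₁, x₂, N (x₁, x₂))) := by
    have wallL : ∀ x₂ ∈ Icc (0:ℝ) L₂,
        (∫ y in (-h)..(N (L₁, x₂)), Ff1 u (L₁, x₂, y))
          = -(1/2) * L₁ * ∫ y in (-h)..(N (L₁, x₂)), Wf u (L₁, x₂, y) := by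
      intro x₂ hx₂
      rw [← intervalIntegral.integral_const_mul]
      apply intervalIntegral.integral_congr
      intro y hy
      dsimp only
      rw [uIcc_of_le (hNge L₁ hL₁mem x₂ hx₂)] at hy
      have hz := hbc1 L₁ (by simp) x₂ hx₂ y hy
      simp only [Ff1, Vf]
      rw [hz]; ring
    have wall0 : ∀ x₂ ∈ Icc (0:ℝ) L₂,
        (∫ y in (-h)..(N (0, x₂)), Ff1 u (0, x₂, y)) = 0 := by
      intro x₂ hx₂
      have : (∫ y in (-h)..(N (0, x₂)), Ff1 u (0, x₂, y))
          = ∫ y in (-h)..(N (0, x₂)), (0:ℝ) := by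
        apply intervalIntegral.integral_congr
        intro y hy
        dsimp only
        rw [uIcc_of_le (hNge 0 h0mem₁ x₂ hx₂)] at hy
        have hz := hbc1 0 (by simp) x₂ hx₂ y hy
        simp only [Ff1, Vf]
        rw [hz]; ring
      simpa using this
    calc -(1/2) * L₁ * (∫ x₂ in (0:ℝ)..L₂, ∫ y in (-h)..(N (L₁, x₂)), Wf u (L₁, x₂, y))
        = ∫ x₂ in (0:ℝ)..L₂,
            ((∫ y in (-h)..(N (L₁, x₂)), Ff1 u (L₁, x₂, y))
              - ∫ y in (-h)..(N (0, x₂)), Ff1 u (0, x₂, y)) := by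
          rw [← intervalIntegral.integral_const_mul]
          apply intervalIntegral.integral_congr
          intro x₂ hx₂
          dsimp only
          rw [uIcc_of_le hL₂] at hx₂
          rw [wallL x₂ hx₂, wall0 x₂ hx₂]
          ring
      _ = ∫ x₂ in (0:ℝ)..L₂, ∫ x₁ in (0:ℝ)..L₁,
            ((∫ y in (-h)..(N (x₁, x₂)), pd1 (Ff1 u) (x₁, x₂, y))
              + qd1 N (x₁, x₂) * Ff1 u (x₁, x₂, N (x₁, x₂))) := by
          apply intervalIntegral.integral_congr
          intro x₂ _
          exact halfA (Ff1_contDiff hu) hN hL₁ x₂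
      _ = ∫ x₁ in (0:ℝ)..L₁, ∫ x₂ in (0:ℝ)..L₂,
            ((∫ y in (-h)..(N (x₁, x₂)), pd1 (Ff1 u) (x₁, x₂, y))
              + qd1 N (x₁, x₂) * Ff1 u (x₁, x₂, N (x₁, x₂))) := by
          exact fubini_cont _ (hα₁c.comp continuous_swap) hL₂ hL₁
  -- Step EqB
  have EqB : -(1/2) * L₂ * (∫ x₁ in (0:ℝ)..L₁, ∫ y in (-h)..(N (x₁, L₂)), Wf u (x₁, L₂, y))
      = ∫ x₁ in (0:ℝ)..L₁, ∫ x₂ in (0:ℝ)..L₂,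
          ((∫ y in (-h)..(N (x₁, x₂)), pd2 (Ff2 u) (x₁, x₂, y))
            + qd2 N (x₁, x₂) * Ff2 u (x₁, x₂, N (x₁, x₂))) := by
    have wallL : ∀ x₁ ∈ Icc (0:ℝ) L₁,
        (∫ y in (-h)..(N (x₁, L₂)), Ff2 u (x₁, L₂, y))
          = -(1/2) * L₂ * ∫ y in (-h)..(N (x₁, L₂)), Wf u (x₁, L₂, y) := by
      intro x₁ hx₁
      rw [← intervalIntegral.integral_const_mul]
      apply intervalIntegral.integral_congr
      intro y hy
      dsimp only
      rw [uIcc_of_le (hNge x₁ hx₁ L₂ hL₂mem)] at hy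
      have hz := hbc2 L₂ (by simp) x₁ hx₁ y hy
      simp only [Ff2, Vf]
      rw [hz]; ring
    have wall0 : ∀ x₁ ∈ Icc (0:ℝ) L₁,
        (∫ y in (-h)..(N (x₁, 0)), Ff2 u (x₁, 0, y)) = 0 := by
      intro x₁ hx₁
      have : (∫ y in (-h)..(N (x₁, 0)), Ff2 u (x₁, 0, y))
          = ∫ y in (-h)..(N (x₁, 0)), (0:ℝ) := by
        apply intervalIntegral.integral_congr
        intro y hy
        dsimp only
        rw [uIcc_of_le (hNge x₁ hx₁ 0 h0mem₂)] at hy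
        have hz := hbc2 0 (by simp) x₁ hx₁ y hy
        simp only [Ff2, Vf]
        rw [hz]; ring
      simpa using this
    calc -(1/2) * L₂ * (∫ x₁ in (0:ℝ)..L₁, ∫ y in (-h)..(N (x₁, L₂)), Wf u (x₁, L₂, y))
        = ∫ x₁ in (0:ℝ)..L₁,
            ((∫ y in (-h)..(N (x₁, L₂)), Ff2 u (x₁, L₂, y))
              - ∫ y in (-h)..(N (x₁, 0)), Ff2 u (x₁, 0, y)) := by
          rw [← intervalIntegral.integral_const_mul]
          apply intervalIntegral.integral_congr
          intro x₁ hx₁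
          dsimp only
          rw [uIcc_of_le hL₁] at hx₁
          rw [wallL x₁ hx₁, wall0 x₁ hx₁]
          ring
      _ = ∫ x₁ in (0:ℝ)..L₁, ∫ x₂ in (0:ℝ)..L₂,
            ((∫ y in (-h)..(N (x₁, x₂)), pd2 (Ff2 u) (x₁, x₂, y))
              + qd2 N (x₁, x₂) * Ff2 u (x₁, x₂, N (x₁, x₂))) := by
          apply intervalIntegral.integral_congr
          intro x₁ _
          exact halfB (Ff2_contDiff hu) hN hL₂ x₁
  -- pointwise identity on Q
  have perx : ∀ x₁ ∈ Icc (0:ℝ) L₁, ∀ x₂ ∈ Icc (0:ℝ) L₂,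
      ((∫ y in (-h)..(N (x₁, x₂)), pd1 (Ff1 u) (x₁, x₂, y))
          + qd1 N (x₁, x₂) * Ff1 u (x₁, x₂, N (x₁, x₂)))
        + ((∫ y in (-h)..(N (x₁, x₂)), pd2 (Ff2 u) (x₁, x₂, y))
          + qd2 N (x₁, x₂) * Ff2 u (x₁, x₂, N (x₁, x₂)))
        = -(1/2) * (∫ y in (-h)..(N (x₁, x₂)), Wf u (x₁, x₂, y))
          + 1/2 * h * Wf u (x₁, x₂, -h)
          + (-(Afun u N x₁ x₂ * (x₁ * Psi1 u N x₁ x₂ + x₂ * Psi2 u N x₁ x₂))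
            + (x₁ * qd1 N (x₁, x₂) + x₂ * qd2 N (x₁, x₂) - N (x₁, x₂))
              * (Afun u N x₁ x₂ * pd3 u (x₁, x₂, N (x₁, x₂))
                  - 1 / 2 * Wf u (x₁, x₂, N (x₁, x₂)))) := by
    intro x₁ hx₁ x₂ hx₂
    have hdiv : (∫ y in (-h)..(N (x₁, x₂)),
        (pd1 (Ff1 u) (x₁, x₂, y) + pd2 (Ff2 u) (x₁, x₂, y) + pd3 (Ff3 u) (x₁, x₂, y)))
        = -(1/2) * ∫ y in (-h)..(N (x₁, x₂)), Wf u (x₁, x₂, y) := by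
      rw [← intervalIntegral.integral_const_mul]
      apply intervalIntegral.integral_congr
      intro y hy
      dsimp only
      rw [uIcc_of_le (hNge x₁ hx₁ x₂ hx₂)] at hy
      rw [div_flux hu, hlap x₁ hx₁ x₂ hx₂ y hy]
      ring
    have hsplit3 : (∫ y in (-h)..(N (x₁, x₂)),
        (pd1 (Ff1 u) (x₁, x₂, y) + pd2 (Ff2 u) (x₁, x₂, y) + pd3 (Ff3 u) (x₁, x₂, y)))
        = (∫ y in (-h)..(N (x₁, x₂)), pd1 (Ff1 u) (x₁, x₂, y))
          + (∫ y in (-h)..(N (x₁, x₂)), pd2 (Ff2 u) (x₁, x₂, y))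
          + (∫ y in (-h)..(N (x₁, x₂)), pd3 (Ff3 u) (x₁, x₂, y)) := by
      have i1 : IntervalIntegrable (fun y => pd1 (Ff1 u) (x₁, x₂, y)) volume (-h) (N (x₁, x₂)) :=
        ((hpF1c.comp (by fun_prop : Continuous
          (fun y : ℝ => ((x₁, x₂, y) : E3)))).intervalIntegrable _ _)
      have i2 : IntervalIntegrable (fun y => pd2 (Ff2 u) (x₁, x₂, y)) volume (-h) (N (x₁, x₂)) :=
        ((hpF2c.comp (by fun_prop : Continuous
          (fun y : ℝ => ((x₁, x₂, y) : E3)))).intervalIntegrable _ _)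
      have i3 : IntervalIntegrable (fun y => pd3 (Ff3 u) (x₁, x₂, y)) volume (-h) (N (x₁, x₂)) :=
        ((hpF3c.comp (by fun_prop : Continuous
          (fun y : ℝ => ((x₁, x₂, y) : E3)))).intervalIntegrable _ _)
      rw [intervalIntegral.integral_add (i1.add i2) i3, intervalIntegral.integral_add i1 i2]
    have hvert := vertical (Ff3_contDiff hu) h x₁ x₂ (N (x₁, x₂))
    have hbot3 : Ff3 u (x₁, x₂, -h) = 1/2 * h * Wf u (x₁, x₂, -h) := by
      simp only [Ff3, Vf]
      rw [hbot x₁ hx₁ x₂ hx₂]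
      ring
    have hsurf := surface_alg u N x₁ x₂
    have e1 : (∫ y in (-h)..(N (x₁, x₂)), pd1 (Ff1 u) (x₁, x₂, y))
        + (∫ y in (-h)..(N (x₁, x₂)), pd2 (Ff2 u) (x₁, x₂, y))
        = -(1/2) * (∫ y in (-h)..(N (x₁, x₂)), Wf u (x₁, x₂, y))
          - (Ff3 u (x₁, x₂, N (x₁, x₂)) - Ff3 u (x₁, x₂, -h)) := by
      have h2 := hsplit3
      rw [hdiv, hvert] at h2
      linarith [h2]
    rw [hbot3] at e1
    linarith [e1, hsurf]
  -- continuity of the various integrands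
  have hT1c : Continuous (fun x : E2 =>
      Afun u N x.1 x.2 * (x.1 * Psi1 u N x.1 x.2 + x.2 * Psi2 u N x.1 x.2)) := by
    fun_prop
  have hT2c : Continuous (fun x : E2 =>
      (x.1 * qd1 N (x.1, x.2) + x.2 * qd2 N (x.1, x.2) - N (x.1, x.2))
        * (Afun u N x.1 x.2 * pd3 u (x.1, x.2, N (x.1, x.2))
            - 1 / 2 * Wf u (x.1, x.2, N (x.1, x.2)))) := by
    have : Continuous (fun x : E2 => pd3 u (x.1, x.2, N (x.1, x.2))) :=
      hu3c.comp (by fun_prop)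
    have : Continuous (fun x : E2 => Wf u (x.1, x.2, N (x.1, x.2))) :=
      hWc.comp (by fun_prop)
    fun_prop
  have hT3c : Continuous (fun x : E2 => Wf u (x.1, x.2, -h)) := hWc.comp (by fun_prop)
  -- integrated identity
  have key : (∫ x₁ in (0:ℝ)..L₁, ∫ x₂ in (0:ℝ)..L₂,
      (((∫ y in (-h)..(N (x₁, x₂)), pd1 (Ff1 u) (x₁, x₂, y))
          + qd1 N (x₁, x₂) * Ff1 u (x₁, x₂, N (x₁, x₂)))
        + ((∫ y in (-h)..(N (x₁, x₂)), pd2 (Ff2 u) (x₁, x₂, y))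
          + qd2 N (x₁, x₂) * Ff2 u (x₁, x₂, N (x₁, x₂)))))
      = ∫ x₁ in (0:ℝ)..L₁, ∫ x₂ in (0:ℝ)..L₂,
        (-(1/2) * (∫ y in (-h)..(N (x₁, x₂)), Wf u (x₁, x₂, y))
          + 1/2 * h * Wf u (x₁, x₂, -h)
          + (-(Afun u N x₁ x₂ * (x₁ * Psi1 u N x₁ x₂ + x₂ * Psi2 u N x₁ x₂))
            + (x₁ * qd1 N (x₁, x₂) + x₂ * qd2 N (x₁, x₂) - N (x₁, x₂))
              * (Afun u N x₁ x₂ * pd3 u (x₁, x₂, N (x₁, x₂))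
                  - 1 / 2 * Wf u (x₁, x₂, N (x₁, x₂))))) := by
    apply intervalIntegral.integral_congr
    intro x₁ hx₁
    dsimp only
    rw [uIcc_of_le hL₁] at hx₁
    apply intervalIntegral.integral_congr
    intro x₂ hx₂
    dsimp only
    rw [uIcc_of_le hL₂] at hx₂
    exact perx x₁ hx₁ x₂ hx₂
  -- split the left-hand side of `key`
  have keyL : (∫ x₁ in (0:ℝ)..L₁, ∫ x₂ in (0:ℝ)..L₂,
      (((∫ y in (-h)..(N (x₁, x₂)), pd1 (Ff1 u) (x₁, x₂, y))
          + qd1 N (x₁, x₂) * Ff1 u (x₁, x₂, N (x₁, x₂)))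
        + ((∫ y in (-h)..(N (x₁, x₂)), pd2 (Ff2 u) (x₁, x₂, y))
          + qd2 N (x₁, x₂) * Ff2 u (x₁, x₂, N (x₁, x₂)))))
      = (∫ x₁ in (0:ℝ)..L₁, ∫ x₂ in (0:ℝ)..L₂,
          ((∫ y in (-h)..(N (x₁, x₂)), pd1 (Ff1 u) (x₁, x₂, y))
            + qd1 N (x₁, x₂) * Ff1 u (x₁, x₂, N (x₁, x₂))))
        + ∫ x₁ in (0:ℝ)..L₁, ∫ x₂ in (0:ℝ)..L₂,
          ((∫ y in (-h)..(N (x₁, x₂)), pd2 (Ff2 u) (x₁, x₂, y))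
            + qd2 N (x₁, x₂) * Ff2 u (x₁, x₂, N (x₁, x₂))) := by
    have inner : ∀ x₁ : ℝ, (∫ x₂ in (0:ℝ)..L₂,
        (((∫ y in (-h)..(N (x₁, x₂)), pd1 (Ff1 u) (x₁, x₂, y))
          + qd1 N (x₁, x₂) * Ff1 u (x₁, x₂, N (x₁, x₂)))
        + ((∫ y in (-h)..(N (x₁, x₂)), pd2 (Ff2 u) (x₁, x₂, y))
          + qd2 N (x₁, x₂) * Ff2 u (x₁, x₂, N (x₁, x₂)))))
        = (∫ x₂ in (0:ℝ)..L₂,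
            ((∫ y in (-h)..(N (x₁, x₂)), pd1 (Ff1 u) (x₁, x₂, y))
              + qd1 N (x₁, x₂) * Ff1 u (x₁, x₂, N (x₁, x₂))))
          + ∫ x₂ in (0:ℝ)..L₂,
            ((∫ y in (-h)..(N (x₁, x₂)), pd2 (Ff2 u) (x₁, x₂, y))
              + qd2 N (x₁, x₂) * Ff2 u (x₁, x₂, N (x₁, x₂))) := by
      intro x₁
      exact intervalIntegral.integral_add
        ((hα₁c.comp (continuous_const.prodMk continuous_id)).intervalIntegrable _ _)
        ((hα₂c.comp (continuous_const.prodMk continuous_id)).intervalIntegrable _ _)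
    rw [intervalIntegral.integral_congr (g := fun x₁ =>
        (∫ x₂ in (0:ℝ)..L₂,
            ((∫ y in (-h)..(N (x₁, x₂)), pd1 (Ff1 u) (x₁, x₂, y))
              + qd1 N (x₁, x₂) * Ff1 u (x₁, x₂, N (x₁, x₂))))
          + ∫ x₂ in (0:ℝ)..L₂,
            ((∫ y in (-h)..(N (x₁, x₂)), pd2 (Ff2 u) (x₁, x₂, y))
              + qd2 N (x₁, x₂) * Ff2 u (x₁, x₂, N (x₁, x₂))))
        (fun x₁ _ => inner x₁)]
    exact intervalIntegral.integral_add
      ((cont_param hα₁c 0 L₂).intervalIntegrable _ _)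
      ((cont_param hα₂c 0 L₂).intervalIntegrable _ _)
  -- split the right-hand side of `key`
  have keyR : (∫ x₁ in (0:ℝ)..L₁, ∫ x₂ in (0:ℝ)..L₂,
      (-(1/2) * (∫ y in (-h)..(N (x₁, x₂)), Wf u (x₁, x₂, y))
        + 1/2 * h * Wf u (x₁, x₂, -h)
        + (-(Afun u N x₁ x₂ * (x₁ * Psi1 u N x₁ x₂ + x₂ * Psi2 u N x₁ x₂))
          + (x₁ * qd1 N (x₁, x₂) + x₂ * qd2 N (x₁, x₂) - N (x₁, x₂))
            * (Afun u N x₁ x₂ * pd3 u (x₁, x₂, N (x₁, x₂))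
                - 1 / 2 * Wf u (x₁, x₂, N (x₁, x₂))))))
      = -(1/2) * (∫ x₁ in (0:ℝ)..L₁, ∫ x₂ in (0:ℝ)..L₂,
            ∫ y in (-h)..(N (x₁, x₂)), Wf u (x₁, x₂, y))
        + 1/2 * h * (∫ x₁ in (0:ℝ)..L₁, ∫ x₂ in (0:ℝ)..L₂, Wf u (x₁, x₂, -h))
        + (-(∫ x₁ in (0:ℝ)..L₁, ∫ x₂ in (0:ℝ)..L₂,
              Afun u N x₁ x₂ * (x₁ * Psi1 u N x₁ x₂ + x₂ * Psi2 u N x₁ x₂))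
          + ∫ x₁ in (0:ℝ)..L₁, ∫ x₂ in (0:ℝ)..L₂,
              (x₁ * qd1 N (x₁, x₂) + x₂ * qd2 N (x₁, x₂) - N (x₁, x₂))
                * (Afun u N x₁ x₂ * pd3 u (x₁, x₂, N (x₁, x₂))
                    - 1 / 2 * Wf u (x₁, x₂, N (x₁, x₂)))) := by
    have i1 : ∀ x₁ : ℝ, IntervalIntegrable (fun x₂ =>
        -(1/2) * (∫ y in (-h)..(N (x₁, x₂)), Wf u (x₁, x₂, y))) volume 0 L₂ :=
      fun x₁ => ((continuous_const.mul (hIntW.comp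
        (continuous_const.prodMk continuous_id))).intervalIntegrable _ _)
    have i2 : ∀ x₁ : ℝ, IntervalIntegrable (fun x₂ =>
        1/2 * h * Wf u (x₁, x₂, -h)) volume 0 L₂ :=
      fun x₁ => ((continuous_const.mul (hT3c.comp
        (continuous_const.prodMk continuous_id))).intervalIntegrable _ _)
    have i3 : ∀ x₁ : ℝ, IntervalIntegrable (fun x₂ =>
        -(Afun u N x₁ x₂ * (x₁ * Psi1 u N x₁ x₂ + x₂ * Psi2 u N x₁ x₂))) volume 0 L₂ :=
      fun x₁ => (((hT1c.comp (continuous_const.prodMk continuous_id)).neg).intervalIntegrable _ _)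
    have i4 : ∀ x₁ : ℝ, IntervalIntegrable (fun x₂ =>
        (x₁ * qd1 N (x₁, x₂) + x₂ * qd2 N (x₁, x₂) - N (x₁, x₂))
          * (Afun u N x₁ x₂ * pd3 u (x₁, x₂, N (x₁, x₂))
              - 1 / 2 * Wf u (x₁, x₂, N (x₁, x₂)))) volume 0 L₂ :=
      fun x₁ => ((hT2c.comp (continuous_const.prodMk continuous_id)).intervalIntegrable _ _)
    have inner : ∀ x₁ : ℝ, (∫ x₂ in (0:ℝ)..L₂,
        (-(1/2) * (∫ y in (-h)..(N (x₁, x₂)), Wf u (x₁, x₂, y))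
          + 1/2 * h * Wf u (x₁, x₂, -h)
          + (-(Afun u N x₁ x₂ * (x₁ * Psi1 u N x₁ x₂ + x₂ * Psi2 u N x₁ x₂))
            + (x₁ * qd1 N (x₁, x₂) + x₂ * qd2 N (x₁, x₂) - N (x₁, x₂))
              * (Afun u N x₁ x₂ * pd3 u (x₁, x₂, N (x₁, x₂))
                  - 1 / 2 * Wf u (x₁, x₂, N (x₁, x₂))))))
        = -(1/2) * (∫ x₂ in (0:ℝ)..L₂, ∫ y in (-h)..(N (x₁, x₂)), Wf u (x₁, x₂, y))
          + 1/2 * h * (∫ x₂ in (0:ℝ)..L₂, Wf u (x₁, x₂, -h))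
          + (-(∫ x₂ in (0:ℝ)..L₂,
                Afun u N x₁ x₂ * (x₁ * Psi1 u N x₁ x₂ + x₂ * Psi2 u N x₁ x₂))
            + ∫ x₂ in (0:ℝ)..L₂,
                (x₁ * qd1 N (x₁, x₂) + x₂ * qd2 N (x₁, x₂) - N (x₁, x₂))
                  * (Afun u N x₁ x₂ * pd3 u (x₁, x₂, N (x₁, x₂))
                      - 1 / 2 * Wf u (x₁, x₂, N (x₁, x₂)))) := by
      intro x₁
      rw [intervalIntegral.integral_add ((i1 x₁).add (i2 x₁)) ((i3 x₁).add (i4 x₁)),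
        intervalIntegral.integral_add (i1 x₁) (i2 x₁),
        intervalIntegral.integral_add (i3 x₁) (i4 x₁),
        intervalIntegral.integral_const_mul, intervalIntegral.integral_const_mul,
        intervalIntegral.integral_neg]
    rw [intervalIntegral.integral_congr (g := fun x₁ =>
        -(1/2) * (∫ x₂ in (0:ℝ)..L₂, ∫ y in (-h)..(N (x₁, x₂)), Wf u (x₁, x₂, y))
          + 1/2 * h * (∫ x₂ in (0:ℝ)..L₂, Wf u (x₁, x₂, -h))
          + (-(∫ x₂ in (0:ℝ)..L₂,
                Afun u N x₁ x₂ * (x₁ * Psi1 u N x₁ x₂ + x₂ * Psi2 u N x₁ x₂))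
            + ∫ x₂ in (0:ℝ)..L₂,
                (x₁ * qd1 N (x₁, x₂) + x₂ * qd2 N (x₁, x₂) - N (x₁, x₂))
                  * (Afun u N x₁ x₂ * pd3 u (x₁, x₂, N (x₁, x₂))
                      - 1 / 2 * Wf u (x₁, x₂, N (x₁, x₂)))))
        (fun x₁ _ => inner x₁)]
    have o1 : IntervalIntegrable (fun x₁ =>
        -(1/2) * (∫ x₂ in (0:ℝ)..L₂, ∫ y in (-h)..(N (x₁, x₂)), Wf u (x₁, x₂, y)))
        volume 0 L₁ :=
      ((continuous_const.mul (cont_param hIntW 0 L₂)).intervalIntegrable _ _)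
    have o2 : IntervalIntegrable (fun x₁ =>
        1/2 * h * (∫ x₂ in (0:ℝ)..L₂, Wf u (x₁, x₂, -h))) volume 0 L₁ :=
      ((continuous_const.mul (cont_param hT3c 0 L₂)).intervalIntegrable _ _)
    have o3 : IntervalIntegrable (fun x₁ =>
        -(∫ x₂ in (0:ℝ)..L₂,
          Afun u N x₁ x₂ * (x₁ * Psi1 u N x₁ x₂ + x₂ * Psi2 u N x₁ x₂))) volume 0 L₁ :=
      ((cont_param hT1c 0 L₂).neg.intervalIntegrable _ _)
    have o4 : IntervalIntegrable (fun x₁ =>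
        ∫ x₂ in (0:ℝ)..L₂,
          (x₁ * qd1 N (x₁, x₂) + x₂ * qd2 N (x₁, x₂) - N (x₁, x₂))
            * (Afun u N x₁ x₂ * pd3 u (x₁, x₂, N (x₁, x₂))
                - 1 / 2 * Wf u (x₁, x₂, N (x₁, x₂)))) volume 0 L₁ :=
      ((cont_param hT2c 0 L₂).intervalIntegrable _ _)
    rw [intervalIntegral.integral_add (o1.add o2) (o3.add o4),
      intervalIntegral.integral_add o1 o2,
      intervalIntegral.integral_add o3 o4,
      intervalIntegral.integral_const_mul, intervalIntegral.integral_const_mul,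
      intervalIntegral.integral_neg]
  rw [keyL] at key
  rw [keyR] at key
  rw [← EqA, ← EqB] at key
  linarith [key]

end WW

/-- Lemma 4.3 (`d = 2`), consequence of the Pohozaev identity. -/
theorem pohozaev_consequence_3d
    (L₁ L₂ h g T : ℝ) (hL₁ : 0 < L₁) (hL₂ : 0 < L₂) (hh : 0 < h) (hg : 0 < g) (hT : 0 < T)
    (η : ℝ → ℝ → ℝ → ℝ) (ϕ : ℝ → ℝ → ℝ → ℝ → ℝ)
    (hsol : IsWW3D L₁ L₂ h g T η ϕ) :
    (∫ t in (0:ℝ)..T, ∫ x₁ in (0:ℝ)..L₁, ∫ x₂ in (0:ℝ)..L₂,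
        etaT3 η t x₁ x₂ * (x₁ * psi3X1 η ϕ t x₁ x₂ + x₂ * psi3X2 η ϕ t x₁ x₂))
      = bigP L₁ L₂ h T η ϕ
        - 1 / 2 * (∫ t in (0:ℝ)..T, ∫ x₁ in (0:ℝ)..L₁, ∫ x₂ in (0:ℝ)..L₂,
            ∫ y in (-h)..(η t x₁ x₂), gradSq3 ϕ t x₁ x₂ y)
        + ∫ t in (0:ℝ)..T, ∫ x₁ in (0:ℝ)..L₁, ∫ x₂ in (0:ℝ)..L₂,
            (x₁ * etaX1 η t x₁ x₂ + x₂ * etaX2 η t x₁ x₂ - η t x₁ x₂)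
              * (psi3T η ϕ t x₁ x₂ + g * η t x₁ x₂) := by
  classical
  obtain ⟨hsm_eta, hsm_phi, hlow, _hmean, hlapl, hbcx1, hbcx2, hbcb, hkin, hber, _hx1, _hx2⟩ := hsol
  set Φ : WW.E4 → ℝ := fun p => ϕ p.1 p.2.1 p.2.2.1 p.2.2.2 with hΦdef
  set Hη : WW.E3 → ℝ := fun p => η p.1 p.2.1 p.2.2 with hHdef
  have hΦs' : ContDiff ℝ (⊤:ℕ∞) Φ := hsm_phi
  have hHs' : ContDiff ℝ (⊤:ℕ∞) Hη := hsm_eta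
  have hΦd : Differentiable ℝ Φ := hΦs'.differentiable (by simp)
  have hHd : Differentiable ℝ Hη := hHs'.differentiable (by simp)
  -- global conversions
  have cT3 : ∀ t a b c, phiT3 ϕ t a b c = WW.Pd1 Φ (t, a, b, c) :=
    fun t a b c => (WW.hasDerivAt_P1 hΦd t a b c).deriv
  have cX1g : ∀ t a b c, phiX1 ϕ t a b c = WW.Pd2 Φ (t, a, b, c) :=
    fun t a b c => (WW.hasDerivAt_P2 hΦd t a b c).deriv
  have cX2g : ∀ t a b c, phiX2 ϕ t a b c = WW.Pd3 Φ (t, a, b, c) :=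
    fun t a b c => (WW.hasDerivAt_P3 hΦd t a b c).deriv
  have cY3g : ∀ t a b c, phiY3 ϕ t a b c = WW.Pd4 Φ (t, a, b, c) :=
    fun t a b c => (WW.hasDerivAt_P4 hΦd t a b c).deriv
  have cET : ∀ t a b, etaT3 η t a b = WW.pd1 Hη (t, a, b) :=
    fun t a b => (WW.hasDerivAt_p1 hHd t a b).deriv
  have cEX1 : ∀ t a b, etaX1 η t a b = WW.pd2 Hη (t, a, b) :=
    fun t a b => (WW.hasDerivAt_p2 hHd t a b).deriv
  have cEX2 : ∀ t a b, etaX2 η t a b = WW.pd3 Hη (t, a, b) :=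
    fun t a b => (WW.hasDerivAt_p3 hHd t a b).deriv
  have hΨs : ContDiff ℝ (⊤:ℕ∞) (fun p : WW.E3 => Φ (p.1, p.2.1, p.2.2, Hη p)) :=
    hΦs'.comp (contDiff_fst.prodMk (contDiff_snd.fst.prodMk (contDiff_snd.snd.prodMk hHs')))
  have cPsiTg : ∀ t a b, psi3T η ϕ t a b
      = WW.pd1 (fun p : WW.E3 => Φ (p.1, p.2.1, p.2.2, Hη p)) (t, a, b) :=
    fun t a b => (WW.hasDerivAt_p1
      (hΨs.differentiable (by simp)) t a b).deriv
  -- joint continuity facts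
  have hgradc : Continuous (fun p : WW.E4 => gradSq3 ϕ p.1 p.2.1 p.2.2.1 p.2.2.2) := by
    have he : (fun p : WW.E4 => gradSq3 ϕ p.1 p.2.1 p.2.2.1 p.2.2.2)
        = fun p : WW.E4 => (WW.Pd2 Φ p) ^ 2 + (WW.Pd3 Φ p) ^ 2 + (WW.Pd4 Φ p) ^ 2 := by
      funext p
      simp only [gradSq3, cX1g, cX2g, cY3g]
    rw [he]
    exact (((WW.contDiff_fderiv_apply hΦs' _).continuous.pow 2).add
      ((WW.contDiff_fderiv_apply hΦs' _).continuous.pow 2)).add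
      ((WW.contDiff_fderiv_apply hΦs' _).continuous.pow 2)
  have hetaX1c : Continuous (fun p : WW.E3 => etaX1 η p.1 p.2.1 p.2.2) := by
    have he : (fun p : WW.E3 => etaX1 η p.1 p.2.1 p.2.2) = WW.pd2 Hη := by
      funext p; simp only [cEX1]
    rw [he]; exact (WW.pd2_contDiff hHs').continuous
  have hetaX2c : Continuous (fun p : WW.E3 => etaX2 η p.1 p.2.1 p.2.2) := by
    have he : (fun p : WW.E3 => etaX2 η p.1 p.2.1 p.2.2) = WW.pd3 Hη := by
      funext p; simp only [cEX2]
    rw [he]; exact (WW.pd3_contDiff hHs').continuous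
  have hpsiTc : Continuous (fun p : WW.E3 => psi3T η ϕ p.1 p.2.1 p.2.2) := by
    have he : (fun p : WW.E3 => psi3T η ϕ p.1 p.2.1 p.2.2)
        = WW.pd1 (fun p : WW.E3 => Φ (p.1, p.2.1, p.2.2, Hη p)) := by
      funext p; simp only [cPsiTg]
    rw [he]; exact (WW.pd1_contDiff hΨs).continuous
  have hηc : Continuous Hη := hHs'.continuous
  -- the fixed-time spatial identity
  have spatial : ∀ t ∈ Icc (0:ℝ) T, (∫ x₁ in (0:ℝ)..L₁, ∫ x₂ in (0:ℝ)..L₂,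
        etaT3 η t x₁ x₂ * (x₁ * psi3X1 η ϕ t x₁ x₂ + x₂ * psi3X2 η ϕ t x₁ x₂))
      = 1 / 2 * (L₁ * (∫ x₂ in (0:ℝ)..L₂, ∫ y in (-h)..(η t L₁ x₂), gradSq3 ϕ t L₁ x₂ y)
          + L₂ * (∫ x₁ in (0:ℝ)..L₁, ∫ y in (-h)..(η t x₁ L₂), gradSq3 ϕ t x₁ L₂ y)
          + h * ∫ x₁ in (0:ℝ)..L₁, ∫ x₂ in (0:ℝ)..L₂, gradSq3 ϕ t x₁ x₂ (-h))
        - 1 / 2 * (∫ x₁ in (0:ℝ)..L₁, ∫ x₂ in (0:ℝ)..L₂,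
            ∫ y in (-h)..(η t x₁ x₂), gradSq3 ϕ t x₁ x₂ y)
        + ∫ x₁ in (0:ℝ)..L₁, ∫ x₂ in (0:ℝ)..L₂,
            (x₁ * etaX1 η t x₁ x₂ + x₂ * etaX2 η t x₁ x₂ - η t x₁ x₂)
              * (psi3T η ϕ t x₁ x₂ + g * η t x₁ x₂) := by
    intro t ht
    set u : WW.E3 → ℝ := fun p => ϕ t p.1 p.2.1 p.2.2 with hudef
    set N : WW.E2 → ℝ := fun q => η t q.1 q.2 with hNdef
    have hus : ContDiff ℝ (⊤:ℕ∞) u := hΦs'.comp ((contDiff_const (c := t)).prodMk contDiff_id)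
    have hNs2 : ContDiff ℝ (⊤:ℕ∞) N := hHs'.comp ((contDiff_const (c := t)).prodMk contDiff_id)
    have hud : Differentiable ℝ u := hus.differentiable (by simp)
    have hNd : Differentiable ℝ N := hNs2.differentiable (by simp)
    have cX1 : ∀ a b c, phiX1 ϕ t a b c = WW.pd1 u (a, b, c) :=
      fun a b c => (WW.hasDerivAt_p1 hud a b c).deriv
    have cX2 : ∀ a b c, phiX2 ϕ t a b c = WW.pd2 u (a, b, c) :=
      fun a b c => (WW.hasDerivAt_p2 hud a b c).deriv
    have cY3v : ∀ a b c, phiY3 ϕ t a b c = WW.pd3 u (a, b, c) :=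
      fun a b c => (WW.hasDerivAt_p3 hud a b c).deriv
    have cN1 : ∀ a b, etaX1 η t a b = WW.qd1 N (a, b) :=
      fun a b => (WW.hasDerivAt_q1 hNd a b).deriv
    have cN2 : ∀ a b, etaX2 η t a b = WW.qd2 N (a, b) :=
      fun a b => (WW.hasDerivAt_q2 hNd a b).deriv
    have hNapp : ∀ a b, N (a, b) = η t a b := fun a b => rfl
    have hNgeQ : ∀ x₁ ∈ Icc (0:ℝ) L₁, ∀ x₂ ∈ Icc (0:ℝ) L₂, -h ≤ N (x₁, x₂) := by
      intro a ha b hb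
      have h1 : -h / 2 ≤ η t a b := hlow t ht a ha b hb
      show -h ≤ η t a b
      linarith
    have hlapQ : ∀ x₁ ∈ Icc (0:ℝ) L₁, ∀ x₂ ∈ Icc (0:ℝ) L₂, ∀ y ∈ Icc (-h) (N (x₁, x₂)),
        WW.pd1 (WW.pd1 u) (x₁, x₂, y) + WW.pd2 (WW.pd2 u) (x₁, x₂, y)
          + WW.pd3 (WW.pd3 u) (x₁, x₂, y) = 0 := by
      intro a ha b hb y hy
      have hl := hlapl t ht a ha b hb y hy
      have d1 : deriv (fun s => phiX1 ϕ t s b y) a = WW.pd1 (WW.pd1 u) (a, b, y) := by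
        have hfe : (fun s => phiX1 ϕ t s b y) = fun s => WW.pd1 u (s, b, y) :=
          funext fun s => cX1 s b y
        rw [hfe]
        exact (WW.hasDerivAt_p1 ((WW.pd1_contDiff hus).differentiable
          (by simp)) a b y).deriv
      have d2 : deriv (fun s => phiX2 ϕ t a s y) b = WW.pd2 (WW.pd2 u) (a, b, y) := by
        have hfe : (fun s => phiX2 ϕ t a s y) = fun s => WW.pd2 u (a, s, y) :=
          funext fun s => cX2 a s y
        rw [hfe]
        exact (WW.hasDerivAt_p2 ((WW.pd2_contDiff hus).differentiable
          (by simp)) a b y).deriv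
      have d3 : deriv (fun s => phiY3 ϕ t a b s) y = WW.pd3 (WW.pd3 u) (a, b, y) := by
        have hfe : (fun s => phiY3 ϕ t a b s) = fun s => WW.pd3 u (a, b, s) :=
          funext fun s => cY3v a b s
        rw [hfe]
        exact (WW.hasDerivAt_p3 ((WW.pd3_contDiff hus).differentiable
          (by simp)) a b y).deriv
      rw [d1, d2, d3] at hl
      exact hl
    have hbc1Q : ∀ x₁ ∈ ({0, L₁} : Set ℝ), ∀ x₂ ∈ Icc (0:ℝ) L₂, ∀ y ∈ Icc (-h) (N (x₁, x₂)),
        WW.pd1 u (x₁, x₂, y) = 0 :=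
      fun a ha b hb y hy => (cX1 a b y).symm.trans (hbcx1 t ht a ha b hb y hy)
    have hbc2Q : ∀ x₂ ∈ ({0, L₂} : Set ℝ), ∀ x₁ ∈ Icc (0:ℝ) L₁, ∀ y ∈ Icc (-h) (N (x₁, x₂)),
        WW.pd2 u (x₁, x₂, y) = 0 :=
      fun b hb a ha y hy => (cX2 a b y).symm.trans (hbcx2 t ht b hb a ha y hy)
    have hbotQ : ∀ x₁ ∈ Icc (0:ℝ) L₁, ∀ x₂ ∈ Icc (0:ℝ) L₂, WW.pd3 u (x₁, x₂, -h) = 0 :=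
      fun a ha b hb => (cY3v a b (-h)).symm.trans (hbcb t ht a ha b hb)
    have hcore := WW.core hL₁.le hL₂.le hus hNs2 hNgeQ hlapQ hbc1Q hbc2Q hbotQ
    simp only [WW.Afun, WW.Psi1, WW.Psi2, hNapp] at hcore
    have cW : ∀ a b y, gradSq3 ϕ t a b y = WW.Wf u (a, b, y) := by
      intro a b y
      simp only [gradSq3, WW.Wf, cX1, cX2, cY3v]
    have cPsi1 : ∀ a b, psi3X1 η ϕ t a b
        = WW.pd1 u (a, b, η t a b) + WW.qd1 N (a, b) * WW.pd3 u (a, b, η t a b) := by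
      intro a b
      have hD := WW.hasDerivAt_along hud (hasDerivAt_id a) (hasDerivAt_const a b)
        (WW.hasDerivAt_q1 hNd a b)
      have h0 : psi3X1 η ϕ t a b
          = 1 * WW.pd1 u (a, b, N (a, b)) + 0 * WW.pd2 u (a, b, N (a, b))
            + WW.qd1 N (a, b) * WW.pd3 u (a, b, N (a, b)) := hD.deriv
      rw [h0, hNapp]
      ring
    have cPsi2 : ∀ a b, psi3X2 η ϕ t a b
        = WW.pd2 u (a, b, η t a b) + WW.qd2 N (a, b) * WW.pd3 u (a, b, η t a b) := by
      intro a b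
      have hD := WW.hasDerivAt_along hud (hasDerivAt_const b a) (hasDerivAt_id b)
        (WW.hasDerivAt_q2 hNd a b)
      have h0 : psi3X2 η ϕ t a b
          = 0 * WW.pd1 u (a, b, N (a, b)) + 1 * WW.pd2 u (a, b, N (a, b))
            + WW.qd2 N (a, b) * WW.pd3 u (a, b, N (a, b)) := hD.deriv
      rw [h0, hNapp]
      ring
    have eL : (∫ x₁ in (0:ℝ)..L₁, ∫ x₂ in (0:ℝ)..L₂,
        etaT3 η t x₁ x₂ * (x₁ * psi3X1 η ϕ t x₁ x₂ + x₂ * psi3X2 η ϕ t x₁ x₂))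
        = ∫ x₁ in (0:ℝ)..L₁, ∫ x₂ in (0:ℝ)..L₂,
            ((WW.pd3 u (x₁, x₂, η t x₁ x₂)
                - (WW.qd1 N (x₁, x₂) * WW.pd1 u (x₁, x₂, η t x₁ x₂)
                    + WW.qd2 N (x₁, x₂) * WW.pd2 u (x₁, x₂, η t x₁ x₂)))
              * (x₁ * (WW.pd1 u (x₁, x₂, η t x₁ x₂)
                    + WW.qd1 N (x₁, x₂) * WW.pd3 u (x₁, x₂, η t x₁ x₂))
                + x₂ * (WW.pd2 u (x₁, x₂, η t x₁ x₂)
                    + WW.qd2 N (x₁, x₂) * WW.pd3 u (x₁, x₂, η t x₁ x₂)))) := by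
      apply intervalIntegral.integral_congr
      intro a ha
      dsimp only
      rw [uIcc_of_le hL₁.le] at ha
      apply intervalIntegral.integral_congr
      intro b hb
      dsimp only
      rw [uIcc_of_le hL₂.le] at hb
      have hk := hkin t ht a ha b hb
      simp only [cY3v, cN1, cX1, cN2, cX2] at hk
      rw [hk, cPsi1, cPsi2]
    have eY : (∫ x₁ in (0:ℝ)..L₁, ∫ x₂ in (0:ℝ)..L₂,
        (x₁ * etaX1 η t x₁ x₂ + x₂ * etaX2 η t x₁ x₂ - η t x₁ x₂)
          * (psi3T η ϕ t x₁ x₂ + g * η t x₁ x₂))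
        = ∫ x₁ in (0:ℝ)..L₁, ∫ x₂ in (0:ℝ)..L₂,
            ((x₁ * WW.qd1 N (x₁, x₂) + x₂ * WW.qd2 N (x₁, x₂) - η t x₁ x₂)
              * ((WW.pd3 u (x₁, x₂, η t x₁ x₂)
                  - (WW.qd1 N (x₁, x₂) * WW.pd1 u (x₁, x₂, η t x₁ x₂)
                      + WW.qd2 N (x₁, x₂) * WW.pd2 u (x₁, x₂, η t x₁ x₂)))
                  * WW.pd3 u (x₁, x₂, η t x₁ x₂)
                - 1 / 2 * WW.Wf u (x₁, x₂, η t x₁ x₂))) := by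
      apply intervalIntegral.integral_congr
      intro a ha
      dsimp only
      rw [uIcc_of_le hL₁.le] at ha
      apply intervalIntegral.integral_congr
      intro b hb
      dsimp only
      rw [uIcc_of_le hL₂.le] at hb
      have hk := hkin t ht a ha b hb
      simp only [cY3v, cN1, cX1, cN2, cX2] at hk
      have hb2 := hber t ht a ha b hb
      rw [cT3 t a b (η t a b), cX1 a b (η t a b), cX2 a b (η t a b), cY3v a b (η t a b)] at hb2
      have hkd : HasDerivAt (fun s => η s a b) (etaT3 η t a b) t := by
        have h0 := WW.hasDerivAt_p1 hHd t a b
        rw [← cET t a b] at h0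
        exact h0
      have cPsiT2 : psi3T η ϕ t a b
          = WW.Pd1 Φ (t, a, b, η t a b) + etaT3 η t a b * WW.Pd4 Φ (t, a, b, η t a b) :=
        (WW.hasDerivAt_along4 hΦd hkd).deriv
      have cP4 : WW.Pd4 Φ (t, a, b, η t a b) = WW.pd3 u (a, b, η t a b) :=
        (cY3g t a b (η t a b)).symm.trans (cY3v a b (η t a b))
      have hbT : WW.Pd1 Φ (t, a, b, η t a b)
          = -(1 / 2 * ((WW.pd1 u (a, b, η t a b)) ^ 2 + (WW.pd2 u (a, b, η t a b)) ^ 2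
              + (WW.pd3 u (a, b, η t a b)) ^ 2)) - g * η t a b := by linarith [hb2]
      rw [cN1, cN2, cPsiT2, hk, cP4, hbT]
      simp only [WW.Wf]
      ring
    have eC1 : (∫ x₂ in (0:ℝ)..L₂, ∫ y in (-h)..(η t L₁ x₂), gradSq3 ϕ t L₁ x₂ y)
        = ∫ x₂ in (0:ℝ)..L₂, ∫ y in (-h)..(η t L₁ x₂), WW.Wf u (L₁, x₂, y) := by
      apply intervalIntegral.integral_congr
      intro b _
      dsimp only
      apply intervalIntegral.integral_congr
      intro y _
      dsimp only
      exact cW L₁ b y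
    have eC2 : (∫ x₁ in (0:ℝ)..L₁, ∫ y in (-h)..(η t x₁ L₂), gradSq3 ϕ t x₁ L₂ y)
        = ∫ x₁ in (0:ℝ)..L₁, ∫ y in (-h)..(η t x₁ L₂), WW.Wf u (x₁, L₂, y) := by
      apply intervalIntegral.integral_congr
      intro a _
      dsimp only
      apply intervalIntegral.integral_congr
      intro y _
      dsimp only
      exact cW a L₂ y
    have eC3 : (∫ x₁ in (0:ℝ)..L₁, ∫ x₂ in (0:ℝ)..L₂, gradSq3 ϕ t x₁ x₂ (-h))
        = ∫ x₁ in (0:ℝ)..L₁, ∫ x₂ in (0:ℝ)..L₂, WW.Wf u (x₁, x₂, -h) := by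
      apply intervalIntegral.integral_congr
      intro a _
      dsimp only
      apply intervalIntegral.integral_congr
      intro b _
      dsimp only
      exact cW a b (-h)
    have eB : (∫ x₁ in (0:ℝ)..L₁, ∫ x₂ in (0:ℝ)..L₂,
          ∫ y in (-h)..(η t x₁ x₂), gradSq3 ϕ t x₁ x₂ y)
        = ∫ x₁ in (0:ℝ)..L₁, ∫ x₂ in (0:ℝ)..L₂,
          ∫ y in (-h)..(η t x₁ x₂), WW.Wf u (x₁, x₂, y) := by
      apply intervalIntegral.integral_congr
      intro a _
      dsimp only
      apply intervalIntegral.integral_congr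
      intro b _
      dsimp only
      apply intervalIntegral.integral_congr
      intro y _
      dsimp only
      exact cW a b y
    rw [eL, eY, eC1, eC2, eC3, eB]
    exact hcore
  -- continuity in time of the pieces
  have q1c : Continuous (fun t : ℝ =>
      ∫ x₂ in (0:ℝ)..L₂, ∫ y in (-h)..(η t L₁ x₂), gradSq3 ϕ t L₁ x₂ y) := by
    have g1c : Continuous (fun q : WW.E2 =>
        ∫ y in (-h)..(η q.1 L₁ q.2), gradSq3 ϕ q.1 L₁ q.2 y) :=
      WW.cont_param_end (f := fun z : WW.E2 × ℝ => gradSq3 ϕ z.1.1 L₁ z.1.2 z.2)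
        (show Continuous (fun z : WW.E2 × ℝ => gradSq3 ϕ z.1.1 L₁ z.1.2 z.2) from
          hgradc.comp (by fun_prop :
            Continuous (fun z : WW.E2 × ℝ => ((z.1.1, L₁, z.1.2, z.2) : WW.E4))))
        (e := fun q : WW.E2 => η q.1 L₁ q.2)
        (show Continuous (fun q : WW.E2 => η q.1 L₁ q.2) from
          hηc.comp (by fun_prop : Continuous (fun q : WW.E2 => ((q.1, L₁, q.2) : WW.E3)))) (-h)
    exact WW.cont_param g1c 0 L₂
  have q2c : Continuous (fun t : ℝ =>
      ∫ x₁ in (0:ℝ)..L₁, ∫ y in (-h)..(η t x₁ L₂), gradSq3 ϕ t x₁ L₂ y) := by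
    have g1c : Continuous (fun q : WW.E2 =>
        ∫ y in (-h)..(η q.1 q.2 L₂), gradSq3 ϕ q.1 q.2 L₂ y) :=
      WW.cont_param_end (f := fun z : WW.E2 × ℝ => gradSq3 ϕ z.1.1 z.1.2 L₂ z.2)
        (show Continuous (fun z : WW.E2 × ℝ => gradSq3 ϕ z.1.1 z.1.2 L₂ z.2) from
          hgradc.comp (by fun_prop :
            Continuous (fun z : WW.E2 × ℝ => ((z.1.1, z.1.2, L₂, z.2) : WW.E4))))
        (e := fun q : WW.E2 => η q.1 q.2 L₂)
        (show Continuous (fun q : WW.E2 => η q.1 q.2 L₂) from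
          hηc.comp (by fun_prop : Continuous (fun q : WW.E2 => ((q.1, q.2, L₂) : WW.E3)))) (-h)
    exact WW.cont_param g1c 0 L₁
  have q3c : Continuous (fun t : ℝ =>
      ∫ x₁ in (0:ℝ)..L₁, ∫ x₂ in (0:ℝ)..L₂, gradSq3 ϕ t x₁ x₂ (-h)) := by
    have g1c : Continuous (fun q : WW.E2 =>
        ∫ x₂ in (0:ℝ)..L₂, gradSq3 ϕ q.1 q.2 x₂ (-h)) :=
      WW.cont_param' (f := fun z : WW.E2 × ℝ => gradSq3 ϕ z.1.1 z.1.2 z.2 (-h))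
        (show Continuous (fun z : WW.E2 × ℝ => gradSq3 ϕ z.1.1 z.1.2 z.2 (-h)) from
          hgradc.comp (by fun_prop :
            Continuous (fun z : WW.E2 × ℝ => ((z.1.1, z.1.2, z.2, -h) : WW.E4)))) 0 L₂
    exact WW.cont_param g1c 0 L₁
  have qBc : Continuous (fun t : ℝ =>
      ∫ x₁ in (0:ℝ)..L₁, ∫ x₂ in (0:ℝ)..L₂,
        ∫ y in (-h)..(η t x₁ x₂), gradSq3 ϕ t x₁ x₂ y) := by
    have g4c : Continuous (fun z : WW.E2 × ℝ =>
        ∫ y in (-h)..(η z.1.1 z.1.2 z.2), gradSq3 ϕ z.1.1 z.1.2 z.2 y) :=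
      WW.cont_param_end (X := WW.E2 × ℝ)
        (f := fun w : (WW.E2 × ℝ) × ℝ => gradSq3 ϕ w.1.1.1 w.1.1.2 w.1.2 w.2)
        (show Continuous (fun w : (WW.E2 × ℝ) × ℝ => gradSq3 ϕ w.1.1.1 w.1.1.2 w.1.2 w.2) from
          hgradc.comp (by fun_prop :
            Continuous (fun w : (WW.E2 × ℝ) × ℝ => ((w.1.1.1, w.1.1.2, w.1.2, w.2) : WW.E4))))
        (e := fun z : WW.E2 × ℝ => η z.1.1 z.1.2 z.2)
        (show Continuous (fun z : WW.E2 × ℝ => η z.1.1 z.1.2 z.2) from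
          hηc.comp (by fun_prop :
            Continuous (fun z : WW.E2 × ℝ => ((z.1.1, z.1.2, z.2) : WW.E3)))) (-h)
    have g5c : Continuous (fun q : WW.E2 =>
        ∫ x₂ in (0:ℝ)..L₂, ∫ y in (-h)..(η q.1 q.2 x₂), gradSq3 ϕ q.1 q.2 x₂ y) :=
      WW.cont_param' (f := fun z : WW.E2 × ℝ =>
        ∫ y in (-h)..(η z.1.1 z.1.2 z.2), gradSq3 ϕ z.1.1 z.1.2 z.2 y) g4c 0 L₂
    exact WW.cont_param g5c 0 L₁
  have qYc : Continuous (fun t : ℝ =>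
      ∫ x₁ in (0:ℝ)..L₁, ∫ x₂ in (0:ℝ)..L₂,
        (x₁ * etaX1 η t x₁ x₂ + x₂ * etaX2 η t x₁ x₂ - η t x₁ x₂)
          * (psi3T η ϕ t x₁ x₂ + g * η t x₁ x₂)) := by
    have hY3 : Continuous (fun p : WW.E3 =>
        (p.2.1 * etaX1 η p.1 p.2.1 p.2.2 + p.2.2 * etaX2 η p.1 p.2.1 p.2.2
            - η p.1 p.2.1 p.2.2)
          * (psi3T η ϕ p.1 p.2.1 p.2.2 + g * η p.1 p.2.1 p.2.2)) := by
      have hηc' : Continuous (fun p : WW.E3 => η p.1 p.2.1 p.2.2) := hηc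
      fun_prop
    have g4c : Continuous (fun q : WW.E2 =>
        ∫ x₂ in (0:ℝ)..L₂,
          (q.2 * etaX1 η q.1 q.2 x₂ + x₂ * etaX2 η q.1 q.2 x₂ - η q.1 q.2 x₂)
            * (psi3T η ϕ q.1 q.2 x₂ + g * η q.1 q.2 x₂)) :=
      WW.cont_param' (f := fun z : WW.E2 × ℝ =>
        (z.1.2 * etaX1 η z.1.1 z.1.2 z.2 + z.2 * etaX2 η z.1.1 z.1.2 z.2
            - η z.1.1 z.1.2 z.2)
          * (psi3T η ϕ z.1.1 z.1.2 z.2 + g * η z.1.1 z.1.2 z.2))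
        (show Continuous (fun z : WW.E2 × ℝ =>
            (z.1.2 * etaX1 η z.1.1 z.1.2 z.2 + z.2 * etaX2 η z.1.1 z.1.2 z.2
                - η z.1.1 z.1.2 z.2)
              * (psi3T η ϕ z.1.1 z.1.2 z.2 + g * η z.1.1 z.1.2 z.2)) from
          hY3.comp (by fun_prop :
            Continuous (fun z : WW.E2 × ℝ => ((z.1.1, z.1.2, z.2) : WW.E3)))) 0 L₂
    exact WW.cont_param g4c 0 L₁
  -- integrate in time
  have iP : IntervalIntegrable (fun t : ℝ =>
      1 / 2 * (L₁ * (∫ x₂ in (0:ℝ)..L₂, ∫ y in (-h)..(η t L₁ x₂), gradSq3 ϕ t L₁ x₂ y)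
        + L₂ * (∫ x₁ in (0:ℝ)..L₁, ∫ y in (-h)..(η t x₁ L₂), gradSq3 ϕ t x₁ L₂ y)
        + h * ∫ x₁ in (0:ℝ)..L₁, ∫ x₂ in (0:ℝ)..L₂, gradSq3 ϕ t x₁ x₂ (-h))) volume 0 T :=
    (continuous_const.mul (((continuous_const.mul q1c).add
      (continuous_const.mul q2c)).add (continuous_const.mul q3c))).intervalIntegrable 0 T
  have iB : IntervalIntegrable (fun t : ℝ =>
      1 / 2 * (∫ x₁ in (0:ℝ)..L₁, ∫ x₂ in (0:ℝ)..L₂,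
        ∫ y in (-h)..(η t x₁ x₂), gradSq3 ϕ t x₁ x₂ y)) volume 0 T :=
    (continuous_const.mul qBc).intervalIntegrable 0 T
  have iY : IntervalIntegrable (fun t : ℝ =>
      ∫ x₁ in (0:ℝ)..L₁, ∫ x₂ in (0:ℝ)..L₂,
        (x₁ * etaX1 η t x₁ x₂ + x₂ * etaX2 η t x₁ x₂ - η t x₁ x₂)
          * (psi3T η ϕ t x₁ x₂ + g * η t x₁ x₂)) volume 0 T :=
    qYc.intervalIntegrable 0 T
  calc (∫ t in (0:ℝ)..T, ∫ x₁ in (0:ℝ)..L₁, ∫ x₂ in (0:ℝ)..L₂,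
        etaT3 η t x₁ x₂ * (x₁ * psi3X1 η ϕ t x₁ x₂ + x₂ * psi3X2 η ϕ t x₁ x₂))
      = ∫ t in (0:ℝ)..T,
          (1 / 2 * (L₁ * (∫ x₂ in (0:ℝ)..L₂, ∫ y in (-h)..(η t L₁ x₂), gradSq3 ϕ t L₁ x₂ y)
              + L₂ * (∫ x₁ in (0:ℝ)..L₁, ∫ y in (-h)..(η t x₁ L₂), gradSq3 ϕ t x₁ L₂ y)
              + h * ∫ x₁ in (0:ℝ)..L₁, ∫ x₂ in (0:ℝ)..L₂, gradSq3 ϕ t x₁ x₂ (-h))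
            - 1 / 2 * (∫ x₁ in (0:ℝ)..L₁, ∫ x₂ in (0:ℝ)..L₂,
                ∫ y in (-h)..(η t x₁ x₂), gradSq3 ϕ t x₁ x₂ y)
            + ∫ x₁ in (0:ℝ)..L₁, ∫ x₂ in (0:ℝ)..L₂,
                (x₁ * etaX1 η t x₁ x₂ + x₂ * etaX2 η t x₁ x₂ - η t x₁ x₂)
                  * (psi3T η ϕ t x₁ x₂ + g * η t x₁ x₂)) := by
        apply intervalIntegral.integral_congr
        intro t ht
        dsimp only
        rw [uIcc_of_le hT.le] at ht
        exact spatial t ht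
    _ = (∫ t in (0:ℝ)..T,
          (1 / 2 * (L₁ * (∫ x₂ in (0:ℝ)..L₂, ∫ y in (-h)..(η t L₁ x₂), gradSq3 ϕ t L₁ x₂ y)
              + L₂ * (∫ x₁ in (0:ℝ)..L₁, ∫ y in (-h)..(η t x₁ L₂), gradSq3 ϕ t x₁ L₂ y)
              + h * ∫ x₁ in (0:ℝ)..L₁, ∫ x₂ in (0:ℝ)..L₂, gradSq3 ϕ t x₁ x₂ (-h))
            - 1 / 2 * (∫ x₁ in (0:ℝ)..L₁, ∫ x₂ in (0:ℝ)..L₂,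
                ∫ y in (-h)..(η t x₁ x₂), gradSq3 ϕ t x₁ x₂ y)))
        + ∫ t in (0:ℝ)..T, ∫ x₁ in (0:ℝ)..L₁, ∫ x₂ in (0:ℝ)..L₂,
            (x₁ * etaX1 η t x₁ x₂ + x₂ * etaX2 η t x₁ x₂ - η t x₁ x₂)
              * (psi3T η ϕ t x₁ x₂ + g * η t x₁ x₂) :=
        intervalIntegral.integral_add (iP.sub iB) iY
    _ = (∫ t in (0:ℝ)..T,
          1 / 2 * (L₁ * (∫ x₂ in (0:ℝ)..L₂, ∫ y in (-h)..(η t L₁ x₂), gradSq3 ϕ t L₁ x₂ y)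
              + L₂ * (∫ x₁ in (0:ℝ)..L₁, ∫ y in (-h)..(η t x₁ L₂), gradSq3 ϕ t x₁ L₂ y)
              + h * ∫ x₁ in (0:ℝ)..L₁, ∫ x₂ in (0:ℝ)..L₂, gradSq3 ϕ t x₁ x₂ (-h)))
        - (∫ t in (0:ℝ)..T,
            1 / 2 * (∫ x₁ in (0:ℝ)..L₁, ∫ x₂ in (0:ℝ)..L₂,
                ∫ y in (-h)..(η t x₁ x₂), gradSq3 ϕ t x₁ x₂ y))
        + ∫ t in (0:ℝ)..T, ∫ x₁ in (0:ℝ)..L₁, ∫ x₂ in (0:ℝ)..L₂,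
            (x₁ * etaX1 η t x₁ x₂ + x₂ * etaX2 η t x₁ x₂ - η t x₁ x₂)
              * (psi3T η ϕ t x₁ x₂ + g * η t x₁ x₂) := by
        rw [intervalIntegral.integral_sub iP iB]
    _ = bigP L₁ L₂ h T η ϕ
        - 1 / 2 * (∫ t in (0:ℝ)..T, ∫ x₁ in (0:ℝ)..L₁, ∫ x₂ in (0:ℝ)..L₂,
            ∫ y in (-h)..(η t x₁ x₂), gradSq3 ϕ t x₁ x₂ y)
        + ∫ t in (0:ℝ)..T, ∫ x₁ in (0:ℝ)..L₁, ∫ x₂ in (0:ℝ)..L₂,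
            (x₁ * etaX1 η t x₁ x₂ + x₂ * etaX2 η t x₁ x₂ - η t x₁ x₂)
              * (psi3T η ϕ t x₁ x₂ + g * η t x₁ x₂) := by
        rw [intervalIntegral.integral_const_mul, intervalIntegral.integral_const_mul]
        simp only [bigP]
end
end

section
/- Let Q = [0,L₁] × [0,L₂] with L₁, L₂ > 0, let h > 0, let η : Q → ℝ be C¹ with η ≥ −h, and set Ω := {(x,y) : x ∈ Q, −h ≤ y ≤ η(x)}. Let u : Ω → ℝ and f = (f₁,f₂) : Ω → ℝ² be C¹. Then ∬_Q u(x,η(x)) dx + ∬_Q f(x,η(x))·∇η(x) dx = ∭_Ω (∂_y u − ∂_{x₁}f₁ − ∂_{x₂}f₂) dy dx + ∬_Q u(x,−h) dx + ∫₀^{L₂}∫₋ₕ^{η(L₁,x₂)} f₁(L₁,x₂,y) dy dx₂ − ∫₀^{L₂}∫₋ₕ^{η(0,x₂)} f₁(0,x₂,y) dy dx₂ + ∫₀^{L₁}∫₋ₕ^{η(x₁,L₂)} f₂(x₁,L₂,y) dy dx₁ − ∫₀^{L₁}∫₋ₕ^{η(x₁,0)} f₂(x₁,0,y) dy dx₁.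 -/
open Real Set MeasureTheory intervalIntegral

namespace DivIdent

open intervalIntegral Asymptotics Metric Filter Topology

lemma hasDerivAt_left {G : ℝ → ℝ → ℝ} (hG : ContDiff ℝ 1 fun p : ℝ × ℝ => G p.1 p.2)
    (x y : ℝ) :
    HasDerivAt (fun s => G s y) (fderiv ℝ (fun p : ℝ × ℝ => G p.1 p.2) (x, y) (1, 0)) x := by
  have h1 : HasDerivAt (fun s : ℝ => (s, y)) ((1 : ℝ), (0 : ℝ)) x :=
    HasDerivAt.prodMk (hasDerivAt_id x) (hasDerivAt_const x y)
  exact ((hG.differentiable one_ne_zero (x, y)).hasFDerivAt).comp_hasDerivAt x h1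

lemma hasDerivAt_right {G : ℝ → ℝ → ℝ} (hG : ContDiff ℝ 1 fun p : ℝ × ℝ => G p.1 p.2)
    (x y : ℝ) :
    HasDerivAt (fun s => G x s) (fderiv ℝ (fun p : ℝ × ℝ => G p.1 p.2) (x, y) (0, 1)) y := by
  have h1 : HasDerivAt (fun s : ℝ => (x, s)) ((0 : ℝ), (1 : ℝ)) y :=
    HasDerivAt.prodMk (hasDerivAt_const y x) (hasDerivAt_id y)
  exact ((hG.differentiable one_ne_zero (x, y)).hasFDerivAt).comp_hasDerivAt y h1

lemma continuous_fderiv_apply {E : Type*} [NormedAddCommGroup E] [NormedSpace ℝ E]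
    {G : E → ℝ} (hG : ContDiff ℝ 1 G) (v : E) :
    Continuous fun p => fderiv ℝ G p v :=
  (hG.continuous_fderiv one_ne_zero).clm_apply continuous_const

lemma hasDerivAt_param {G G' : ℝ → ℝ → ℝ}
    (hGc : Continuous fun p : ℝ × ℝ => G p.1 p.2)
    (hG'c : Continuous fun p : ℝ × ℝ => G' p.1 p.2)
    (hder : ∀ x y, HasDerivAt (fun s => G s y) (G' x y) x)
    (c t x₀ : ℝ) :
    HasDerivAt (fun x => ∫ y in c..t, G x y) (∫ y in c..t, G' x₀ y) x₀ := by
  obtain ⟨C, hC⟩ : ∃ C, ∀ p ∈ (Metric.closedBall x₀ 1) ×ˢ (uIcc c t), ‖G' p.1 p.2‖ ≤ C :=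
    ((isCompact_closedBall x₀ 1).prod isCompact_uIcc).exists_bound_of_continuousOn
      hG'c.continuousOn
  have hGx : ∀ x : ℝ, Continuous fun y => G x y := fun x =>
    hGc.comp (continuous_const.prodMk continuous_id)
  have hG'x : ∀ x : ℝ, Continuous fun y => G' x y := fun x =>
    hG'c.comp (continuous_const.prodMk continuous_id)
  refine (intervalIntegral.hasDerivAt_integral_of_dominated_loc_of_deriv_le
      (F := fun x y => G x y) (F' := fun x y => G' x y) (bound := fun _ => C)
      (Metric.ball_mem_nhds x₀ one_pos) ?_ ?_ ?_ ?_ ?_ ?_).2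
  · exact Eventually.of_forall fun x => ((hGx x).aestronglyMeasurable).restrict
  · exact (hGx x₀).intervalIntegrable c t
  · exact ((hG'x x₀).aestronglyMeasurable).restrict
  · refine Eventually.of_forall fun y hy x hx => hC (x, y) ⟨ball_subset_closedBall hx, ?_⟩
    exact uIoc_subset_uIcc hy
  · exact intervalIntegrable_const
  · exact Eventually.of_forall fun y _ x _ => hder x y

lemma leibniz {G G' : ℝ → ℝ → ℝ}
    (hGc : Continuous fun p : ℝ × ℝ => G p.1 p.2)
    (hG'c : Continuous fun p : ℝ × ℝ => G' p.1 p.2)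
    (hder : ∀ x y, HasDerivAt (fun s => G s y) (G' x y) x)
    (c x₀ t₀ : ℝ) :
    HasFDerivAt (fun p : ℝ × ℝ => ∫ y in c..p.2, G p.1 y)
      ((∫ y in c..t₀, G' x₀ y) • ContinuousLinearMap.fst ℝ ℝ ℝ
        + G x₀ t₀ • ContinuousLinearMap.snd ℝ ℝ ℝ) ((x₀, t₀) : ℝ × ℝ) := by
  have hGx : ∀ x : ℝ, Continuous fun y => G x y := fun x =>
    hGc.comp (continuous_const.prodMk continuous_id)
  rw [hasFDerivAt_iff_isLittleO_nhds_zero]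
  have key : ∀ h : ℝ × ℝ,
      (∫ y in c..(t₀ + h.2), G (x₀ + h.1) y) - (∫ y in c..t₀, G x₀ y)
        - ((∫ y in c..t₀, G' x₀ y) • ContinuousLinearMap.fst ℝ ℝ ℝ
            + G x₀ t₀ • ContinuousLinearMap.snd ℝ ℝ ℝ) h
      = ((∫ y in c..t₀, G (x₀ + h.1) y) - (∫ y in c..t₀, G x₀ y)
            - h.1 * (∫ y in c..t₀, G' x₀ y))
        + ((∫ y in t₀..(t₀ + h.2), G (x₀ + h.1) y) - G x₀ t₀ * h.2) := by
    intro h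
    have hsplit : (∫ y in c..t₀, G (x₀ + h.1) y) + (∫ y in t₀..(t₀ + h.2), G (x₀ + h.1) y)
        = ∫ y in c..(t₀ + h.2), G (x₀ + h.1) y :=
      intervalIntegral.integral_add_adjacent_intervals
        ((hGx _).intervalIntegrable _ _) ((hGx _).intervalIntegrable _ _)
    simp only [ContinuousLinearMap.add_apply, ContinuousLinearMap.smul_apply,
      ContinuousLinearMap.coe_fst', ContinuousLinearMap.coe_snd', smul_eq_mul]
    rw [← hsplit]; ring
  simp only [Prod.fst_add, Prod.snd_add]
  simp only [key]
  have term1 : (fun h : ℝ × ℝ =>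
      (∫ y in c..t₀, G (x₀ + h.1) y) - (∫ y in c..t₀, G x₀ y)
        - h.1 * (∫ y in c..t₀, G' x₀ y)) =o[𝓝 0] fun h : ℝ × ℝ => h := by
    have hd := hasDerivAt_param hGc hG'c hder c t₀ x₀
    have h1 : (fun s : ℝ => (∫ y in c..t₀, G (x₀ + s) y) - (∫ y in c..t₀, G x₀ y)
        - s * (∫ y in c..t₀, G' x₀ y)) =o[𝓝 0] fun s : ℝ => s := by
      have := hasDerivAt_iff_isLittleO_nhds_zero.1 hd
      simpa [smul_eq_mul, mul_comm] using this
    have h2 := h1.comp_tendsto (continuous_fst.tendsto (0 : ℝ × ℝ))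
    refine h2.trans_isBigO ?_
    refine Asymptotics.IsBigO.of_bound 1 (Eventually.of_forall fun h => ?_)
    simpa using norm_fst_le h
  have term2 : (fun h : ℝ × ℝ =>
      (∫ y in t₀..(t₀ + h.2), G (x₀ + h.1) y) - G x₀ t₀ * h.2) =o[𝓝 0]
      fun h : ℝ × ℝ => h := by
    rw [Asymptotics.isLittleO_iff]
    intro ε hε
    have hcont : ContinuousAt (fun p : ℝ × ℝ => G p.1 p.2) (x₀, t₀) := hGc.continuousAt
    rcases Metric.continuousAt_iff.1 hcont ε hε with ⟨δ, hδ, hδ'⟩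
    rw [Metric.eventually_nhds_iff]
    refine ⟨δ, hδ, fun {h} hhδ => ?_⟩
    have hnorm : ‖h‖ < δ := by simpa [dist_zero_right] using hhδ
    have h2le : |h.2| ≤ ‖h‖ := by simpa using norm_snd_le h
    have h1le : |h.1| ≤ ‖h‖ := by simpa using norm_fst_le h
    have hsub : (∫ y in t₀..(t₀ + h.2), G (x₀ + h.1) y) - G x₀ t₀ * h.2
        = ∫ y in t₀..(t₀ + h.2), (G (x₀ + h.1) y - G x₀ t₀) := by
      rw [intervalIntegral.integral_sub ((hGx _).intervalIntegrable _ _)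
        intervalIntegrable_const, intervalIntegral.integral_const]
      simp [smul_eq_mul, mul_comm]
    rw [hsub]
    have hbd : ∀ y ∈ Set.uIoc t₀ (t₀ + h.2), ‖G (x₀ + h.1) y - G x₀ t₀‖ ≤ ε := by
      intro y hy
      have hy' : |y - t₀| ≤ |h.2| := by
        rcases Set.mem_uIoc.1 hy with ⟨hy1, hy2⟩ | ⟨hy1, hy2⟩
        · rw [abs_of_pos (by linarith)]
          have := le_abs_self h.2; linarith
        · rw [abs_of_nonpos (by linarith)]
          have := neg_abs_le h.2; linarith
      have hdist : dist ((x₀ + h.1, y) : ℝ × ℝ) (x₀, t₀) < δ := by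
        rw [Prod.dist_eq]
        refine max_lt ?_ ?_
        · simpa [Real.dist_eq] using lt_of_le_of_lt h1le hnorm
        · rw [Real.dist_eq]
          exact lt_of_le_of_lt (le_trans hy' h2le) hnorm
      have := hδ' hdist
      rw [Real.dist_eq] at this
      exact le_of_lt this
    calc ‖∫ y in t₀..(t₀ + h.2), (G (x₀ + h.1) y - G x₀ t₀)‖
        ≤ ε * |t₀ + h.2 - t₀| := intervalIntegral.norm_integral_le_of_norm_le_const hbd
      _ = ε * |h.2| := by ring_nf
      _ ≤ ε * ‖h‖ := by nlinarith [abs_nonneg h.2, norm_nonneg h]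
  exact term1.add term2

/-- Leibniz rule for `x ↦ ∫ y in c..β x, G x y`. -/
lemma leibniz_comp {G G' : ℝ → ℝ → ℝ}
    (hGc : Continuous fun p : ℝ × ℝ => G p.1 p.2)
    (hG'c : Continuous fun p : ℝ × ℝ => G' p.1 p.2)
    (hder : ∀ x y, HasDerivAt (fun s => G s y) (G' x y) x)
    {β : ℝ → ℝ} {β' : ℝ} (c x₀ : ℝ) (hβ : HasDerivAt β β' x₀) :
    HasDerivAt (fun x => ∫ y in c..β x, G x y)
      (G x₀ (β x₀) * β' + ∫ y in c..β x₀, G' x₀ y) x₀ := by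
  have h1 : HasDerivAt (fun x : ℝ => (x, β x)) ((1 : ℝ), β') x₀ := HasDerivAt.prodMk (hasDerivAt_id x₀) hβ
  have h2 := (leibniz hGc hG'c hder c x₀ (β x₀)).comp_hasDerivAt x₀ h1
  refine h2.congr_deriv ?_
  simp [ContinuousLinearMap.add_apply, ContinuousLinearMap.smul_apply, smul_eq_mul]
  ring

/-- FTC for the Leibniz-rule derivative over `[a,b]`. -/
lemma ftc_leibniz {G G' : ℝ → ℝ → ℝ}
    (hGc : Continuous fun p : ℝ × ℝ => G p.1 p.2)
    (hG'c : Continuous fun p : ℝ × ℝ => G' p.1 p.2)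
    (hder : ∀ x y, HasDerivAt (fun s => G s y) (G' x y) x)
    {β β' : ℝ → ℝ} (hβ : ∀ x, HasDerivAt β (β' x) x) (hβc : Continuous β)
    (hβ'c : Continuous β') (c a b : ℝ) :
    ∫ x in a..b, (G x (β x) * β' x + ∫ y in c..β x, G' x y)
      = (∫ y in c..β b, G b y) - (∫ y in c..β a, G a y) := by
  refine intervalIntegral.integral_eq_sub_of_hasDerivAt
    (fun x _ => leibniz_comp hGc hG'c hder c x (hβ x)) ?_
  apply Continuous.intervalIntegrable
  refine ((hGc.comp (continuous_id.prodMk hβc)).mul hβ'c).add ?_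
  exact continuous_parametric_intervalIntegral_of_continuous
    (f := fun x y => G' x y) (by exact hG'c) hβc

/-- Fubini for continuous functions on a rectangle. -/
lemma integral_swap {a b c d : ℝ} (hab : a ≤ b) (hcd : c ≤ d) {P : ℝ → ℝ → ℝ}
    (hP : Continuous fun p : ℝ × ℝ => P p.1 p.2) :
    ∫ x in a..b, ∫ y in c..d, P x y = ∫ y in c..d, ∫ x in a..b, P x y := by
  simp only [intervalIntegral.integral_of_le hab, intervalIntegral.integral_of_le hcd]
  apply MeasureTheory.integral_integral_swap
  rw [Function.uncurry_def]
  rw [Measure.prod_restrict]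
  have h1 : IntegrableOn (fun p : ℝ × ℝ => P p.1 p.2) (Icc a b ×ˢ Icc c d)
      (volume.prod volume) :=
    hP.continuousOn.integrableOn_compact (isCompact_Icc.prod isCompact_Icc)
  exact h1.mono_set (Set.prod_mono Ioc_subset_Icc_self Ioc_subset_Icc_self)

variable {F : ℝ → ℝ → ℝ → ℝ}

lemma hasDerivAt3_1 (hF : ContDiff ℝ 1 fun p : ℝ × ℝ × ℝ => F p.1 p.2.1 p.2.2) (a b c : ℝ) :
    HasDerivAt (fun s => F s b c)
      (fderiv ℝ (fun p : ℝ × ℝ × ℝ => F p.1 p.2.1 p.2.2) (a, b, c) (1, 0, 0)) a := by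
  have h1 : HasDerivAt (fun s : ℝ => ((s, b, c) : ℝ × ℝ × ℝ)) ((1 : ℝ), (0 : ℝ), (0 : ℝ)) a :=
    HasDerivAt.prodMk (hasDerivAt_id a) (HasDerivAt.prodMk (hasDerivAt_const a b) (hasDerivAt_const a c))
  exact ((hF.differentiable one_ne_zero _).hasFDerivAt).comp_hasDerivAt a h1

lemma hasDerivAt3_2 (hF : ContDiff ℝ 1 fun p : ℝ × ℝ × ℝ => F p.1 p.2.1 p.2.2) (a b c : ℝ) :
    HasDerivAt (fun s => F a s c)
      (fderiv ℝ (fun p : ℝ × ℝ × ℝ => F p.1 p.2.1 p.2.2) (a, b, c) (0, 1, 0)) b := by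
  have h1 : HasDerivAt (fun s : ℝ => ((a, s, c) : ℝ × ℝ × ℝ)) ((0 : ℝ), (1 : ℝ), (0 : ℝ)) b :=
    HasDerivAt.prodMk (hasDerivAt_const b a) (HasDerivAt.prodMk (hasDerivAt_id b) (hasDerivAt_const b c))
  exact ((hF.differentiable one_ne_zero _).hasFDerivAt).comp_hasDerivAt b h1

lemma hasDerivAt3_3 (hF : ContDiff ℝ 1 fun p : ℝ × ℝ × ℝ => F p.1 p.2.1 p.2.2) (a b c : ℝ) :
    HasDerivAt (fun s => F a b s)
      (fderiv ℝ (fun p : ℝ × ℝ × ℝ => F p.1 p.2.1 p.2.2) (a, b, c) (0, 0, 1)) c := by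
  have h1 : HasDerivAt (fun s : ℝ => ((a, b, s) : ℝ × ℝ × ℝ)) ((0 : ℝ), (0 : ℝ), (1 : ℝ)) c :=
    HasDerivAt.prodMk (hasDerivAt_const c a) (HasDerivAt.prodMk (hasDerivAt_const c b) (hasDerivAt_id c))
  exact ((hF.differentiable one_ne_zero _).hasFDerivAt).comp_hasDerivAt c h1

lemma cont_deriv3_1 (hF : ContDiff ℝ 1 fun p : ℝ × ℝ × ℝ => F p.1 p.2.1 p.2.2) :
    Continuous fun p : ℝ × ℝ × ℝ => deriv (fun s => F s p.2.1 p.2.2) p.1 := by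
  have h : (fun p : ℝ × ℝ × ℝ => deriv (fun s => F s p.2.1 p.2.2) p.1)
      = fun p => fderiv ℝ (fun p : ℝ × ℝ × ℝ => F p.1 p.2.1 p.2.2) p (1, 0, 0) :=
    funext fun p => (hasDerivAt3_1 hF p.1 p.2.1 p.2.2).deriv
  rw [h]; exact continuous_fderiv_apply hF _

lemma cont_deriv3_2 (hF : ContDiff ℝ 1 fun p : ℝ × ℝ × ℝ => F p.1 p.2.1 p.2.2) :
    Continuous fun p : ℝ × ℝ × ℝ => deriv (fun s => F p.1 s p.2.2) p.2.1 := by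
  have h : (fun p : ℝ × ℝ × ℝ => deriv (fun s => F p.1 s p.2.2) p.2.1)
      = fun p => fderiv ℝ (fun p : ℝ × ℝ × ℝ => F p.1 p.2.1 p.2.2) p (0, 1, 0) :=
    funext fun p => (hasDerivAt3_2 hF p.1 p.2.1 p.2.2).deriv
  rw [h]; exact continuous_fderiv_apply hF _

lemma cont_deriv3_3 (hF : ContDiff ℝ 1 fun p : ℝ × ℝ × ℝ => F p.1 p.2.1 p.2.2) :
    Continuous fun p : ℝ × ℝ × ℝ => deriv (fun s => F p.1 p.2.1 s) p.2.2 := by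
  have h : (fun p : ℝ × ℝ × ℝ => deriv (fun s => F p.1 p.2.1 s) p.2.2)
      = fun p => fderiv ℝ (fun p : ℝ × ℝ × ℝ => F p.1 p.2.1 p.2.2) p (0, 0, 1) :=
    funext fun p => (hasDerivAt3_3 hF p.1 p.2.1 p.2.2).deriv
  rw [h]; exact continuous_fderiv_apply hF _

lemma double_add {a b c d : ℝ} {P Q : ℝ → ℝ → ℝ}
    (hP : Continuous fun p : ℝ × ℝ => P p.1 p.2)
    (hQ : Continuous fun p : ℝ × ℝ => Q p.1 p.2) :
    ∫ x in a..b, ∫ y in c..d, (P x y + Q x y)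
      = (∫ x in a..b, ∫ y in c..d, P x y) + ∫ x in a..b, ∫ y in c..d, Q x y := by
  have h1 : ∀ x : ℝ, (∫ y in c..d, (P x y + Q x y))
      = (∫ y in c..d, P x y) + ∫ y in c..d, Q x y := fun x =>
    intervalIntegral.integral_add
      ((hP.comp (continuous_const.prodMk continuous_id)).intervalIntegrable _ _)
      ((hQ.comp (continuous_const.prodMk continuous_id)).intervalIntegrable _ _)
  simp only [h1]
  exact intervalIntegral.integral_add
    ((continuous_parametric_intervalIntegral_of_continuous' (f := fun x y => P x y)
        hP c d).intervalIntegrable _ _)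
    ((continuous_parametric_intervalIntegral_of_continuous' (f := fun x y => Q x y)
        hQ c d).intervalIntegrable _ _)

lemma double_sub {a b c d : ℝ} {P Q : ℝ → ℝ → ℝ}
    (hP : Continuous fun p : ℝ × ℝ => P p.1 p.2)
    (hQ : Continuous fun p : ℝ × ℝ => Q p.1 p.2) :
    ∫ x in a..b, ∫ y in c..d, (P x y - Q x y)
      = (∫ x in a..b, ∫ y in c..d, P x y) - ∫ x in a..b, ∫ y in c..d, Q x y := by
  have h1 : ∀ x : ℝ, (∫ y in c..d, (P x y - Q x y))
      = (∫ y in c..d, P x y) - ∫ y in c..d, Q x y := fun x =>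
    intervalIntegral.integral_sub
      ((hP.comp (continuous_const.prodMk continuous_id)).intervalIntegrable _ _)
      ((hQ.comp (continuous_const.prodMk continuous_id)).intervalIntegrable _ _)
  simp only [h1]
  exact intervalIntegral.integral_sub
    ((continuous_parametric_intervalIntegral_of_continuous' (f := fun x y => P x y)
        hP c d).intervalIntegrable _ _)
    ((continuous_parametric_intervalIntegral_of_continuous' (f := fun x y => Q x y)
        hQ c d).intervalIntegrable _ _)

end DivIdent

/-- divergence-type identity (identity (63) in the paper):
for `u` scalar and `f = (f₁,f₂)` a horizontal vector field, both `C¹` on the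
fluid domain `Ω = {(x,y) : x ∈ Q, -h ≤ y ≤ η(x)}`, the surface terms equal the
bulk term plus the bottom term plus the lateral fluxes. -/
theorem divergence_identity
    (L₁ L₂ h : ℝ) (hL₁ : 0 < L₁) (hL₂ : 0 < L₂) (hh : 0 < h)
    (η : ℝ → ℝ → ℝ)
    (hη : ContDiff ℝ 1 (fun p : ℝ × ℝ => η p.1 p.2))
    (hηb : ∀ x₁ ∈ Icc (0:ℝ) L₁, ∀ x₂ ∈ Icc (0:ℝ) L₂, -h ≤ η x₁ x₂)
    (u f₁ f₂ : ℝ → ℝ → ℝ → ℝ)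
    (hu : ContDiff ℝ 1 (fun p : ℝ × ℝ × ℝ => u p.1 p.2.1 p.2.2))
    (hf₁ : ContDiff ℝ 1 (fun p : ℝ × ℝ × ℝ => f₁ p.1 p.2.1 p.2.2))
    (hf₂ : ContDiff ℝ 1 (fun p : ℝ × ℝ × ℝ => f₂ p.1 p.2.1 p.2.2)) :
    (∫ x₁ in (0:ℝ)..L₁, ∫ x₂ in (0:ℝ)..L₂, u x₁ x₂ (η x₁ x₂))
      + (∫ x₁ in (0:ℝ)..L₁, ∫ x₂ in (0:ℝ)..L₂,
          (f₁ x₁ x₂ (η x₁ x₂) * deriv (fun s => η s x₂) x₁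
            + f₂ x₁ x₂ (η x₁ x₂) * deriv (fun s => η x₁ s) x₂))
      = (∫ x₁ in (0:ℝ)..L₁, ∫ x₂ in (0:ℝ)..L₂, ∫ y in (-h)..(η x₁ x₂),
            (deriv (fun s => u x₁ x₂ s) y
              - deriv (fun s => f₁ s x₂ y) x₁ - deriv (fun s => f₂ x₁ s y) x₂))
        + (∫ x₁ in (0:ℝ)..L₁, ∫ x₂ in (0:ℝ)..L₂, u x₁ x₂ (-h))
        + (∫ x₂ in (0:ℝ)..L₂, ∫ y in (-h)..(η L₁ x₂), f₁ L₁ x₂ y)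
        - (∫ x₂ in (0:ℝ)..L₂, ∫ y in (-h)..(η 0 x₂), f₁ 0 x₂ y)
        + (∫ x₁ in (0:ℝ)..L₁, ∫ y in (-h)..(η x₁ L₂), f₂ x₁ L₂ y)
        - (∫ x₁ in (0:ℝ)..L₁, ∫ y in (-h)..(η x₁ 0), f₂ x₁ 0 y) := by
  have ηc : Continuous fun p : ℝ × ℝ => η p.1 p.2 := hη.continuous
  have uc : Continuous fun p : ℝ × ℝ × ℝ => u p.1 p.2.1 p.2.2 := hu.continuous
  have f₁c : Continuous fun p : ℝ × ℝ × ℝ => f₁ p.1 p.2.1 p.2.2 := hf₁.continuous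
  have f₂c : Continuous fun p : ℝ × ℝ × ℝ => f₂ p.1 p.2.1 p.2.2 := hf₂.continuous
  have cdu := DivIdent.cont_deriv3_3 hu
  have cdf₁ := DivIdent.cont_deriv3_1 hf₁
  have cdf₂ := DivIdent.cont_deriv3_2 hf₂
  have cdη1 : Continuous fun p : ℝ × ℝ => deriv (fun s => η s p.2) p.1 := by
    have hx : (fun p : ℝ × ℝ => deriv (fun s => η s p.2) p.1)
        = fun p => fderiv ℝ (fun p : ℝ × ℝ => η p.1 p.2) p (1, 0) :=
      funext fun p => (DivIdent.hasDerivAt_left hη p.1 p.2).deriv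
    rw [hx]; exact DivIdent.continuous_fderiv_apply hη _
  have cdη2 : Continuous fun p : ℝ × ℝ => deriv (fun s => η p.1 s) p.2 := by
    have hx : (fun p : ℝ × ℝ => deriv (fun s => η p.1 s) p.2)
        = fun p => fderiv ℝ (fun p : ℝ × ℝ => η p.1 p.2) p (0, 1) :=
      funext fun p => (DivIdent.hasDerivAt_right hη p.1 p.2).deriv
    rw [hx]; exact DivIdent.continuous_fderiv_apply hη _
  -- pointwise FTC in the vertical variable
  have E1 : ∀ x₁ x₂ : ℝ,
      (∫ y in (-h)..(η x₁ x₂),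
          (deriv (fun s => u x₁ x₂ s) y
            - deriv (fun s => f₁ s x₂ y) x₁ - deriv (fun s => f₂ x₁ s y) x₂))
      = (u x₁ x₂ (η x₁ x₂) - u x₁ x₂ (-h))
        - (∫ y in (-h)..(η x₁ x₂), deriv (fun s => f₁ s x₂ y) x₁)
        - (∫ y in (-h)..(η x₁ x₂), deriv (fun s => f₂ x₁ s y) x₂) := by
    intro x₁ x₂
    have c1 : Continuous fun y => deriv (fun s => u x₁ x₂ s) y :=
      cdu.comp (continuous_const.prodMk (continuous_const.prodMk continuous_id))
    have c2 : Continuous fun y => deriv (fun s => f₁ s x₂ y) x₁ :=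
      cdf₁.comp (continuous_const.prodMk (continuous_const.prodMk continuous_id))
    have c3 : Continuous fun y => deriv (fun s => f₂ x₁ s y) x₂ :=
      cdf₂.comp (continuous_const.prodMk (continuous_const.prodMk continuous_id))
    rw [intervalIntegral.integral_sub ((c1.intervalIntegrable _ _).sub
          (c2.intervalIntegrable _ _)) (c3.intervalIntegrable _ _),
        intervalIntegral.integral_sub (c1.intervalIntegrable _ _) (c2.intervalIntegrable _ _),
        intervalIntegral.integral_eq_sub_of_hasDerivAt
          (fun y _ => (DivIdent.hasDerivAt3_3 hu x₁ x₂ y).differentiableAt.hasDerivAt)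
          (c1.intervalIntegrable _ _)]
  simp only [E1]
  -- continuity of the various integrands
  have cSη : Continuous fun p : ℝ × ℝ => u p.1 p.2 (η p.1 p.2) :=
    uc.comp (continuous_fst.prodMk (continuous_snd.prodMk ηc))
  have cBot : Continuous fun p : ℝ × ℝ => u p.1 p.2 (-h) :=
    uc.comp (continuous_fst.prodMk (continuous_snd.prodMk continuous_const))
  have cI₁ : Continuous fun p : ℝ × ℝ =>
      ∫ y in (-h)..(η p.1 p.2), deriv (fun s => f₁ s p.2 y) p.1 :=
    continuous_parametric_intervalIntegral_of_continuous
      (f := fun p : ℝ × ℝ => fun y => deriv (fun s => f₁ s p.2 y) p.1)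
      (by exact cdf₁.comp ((continuous_fst.comp continuous_fst).prodMk
        ((continuous_snd.comp continuous_fst).prodMk continuous_snd))) ηc
  have cI₂ : Continuous fun p : ℝ × ℝ =>
      ∫ y in (-h)..(η p.1 p.2), deriv (fun s => f₂ p.1 s y) p.2 :=
    continuous_parametric_intervalIntegral_of_continuous
      (f := fun p : ℝ × ℝ => fun y => deriv (fun s => f₂ p.1 s y) p.2)
      (by exact cdf₂.comp ((continuous_fst.comp continuous_fst).prodMk
        ((continuous_snd.comp continuous_fst).prodMk continuous_snd))) ηc
  have cT₁ : Continuous fun p : ℝ × ℝ =>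
      f₁ p.1 p.2 (η p.1 p.2) * deriv (fun s => η s p.2) p.1 :=
    (f₁c.comp (continuous_fst.prodMk (continuous_snd.prodMk ηc))).mul cdη1
  have cT₂ : Continuous fun p : ℝ × ℝ =>
      f₂ p.1 p.2 (η p.1 p.2) * deriv (fun s => η p.1 s) p.2 :=
    (f₂c.comp (continuous_fst.prodMk (continuous_snd.prodMk ηc))).mul cdη2
  -- split the bulk double integral
  have hbulk : (∫ x₁ in (0:ℝ)..L₁, ∫ x₂ in (0:ℝ)..L₂,
        ((u x₁ x₂ (η x₁ x₂) - u x₁ x₂ (-h))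
          - (∫ y in (-h)..(η x₁ x₂), deriv (fun s => f₁ s x₂ y) x₁)
          - (∫ y in (-h)..(η x₁ x₂), deriv (fun s => f₂ x₁ s y) x₂)))
      = ((∫ x₁ in (0:ℝ)..L₁, ∫ x₂ in (0:ℝ)..L₂, u x₁ x₂ (η x₁ x₂))
          - (∫ x₁ in (0:ℝ)..L₁, ∫ x₂ in (0:ℝ)..L₂, u x₁ x₂ (-h))
          - (∫ x₁ in (0:ℝ)..L₁, ∫ x₂ in (0:ℝ)..L₂,
              ∫ y in (-h)..(η x₁ x₂), deriv (fun s => f₁ s x₂ y) x₁))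
          - (∫ x₁ in (0:ℝ)..L₁, ∫ x₂ in (0:ℝ)..L₂,
              ∫ y in (-h)..(η x₁ x₂), deriv (fun s => f₂ x₁ s y) x₂) := by
    rw [DivIdent.double_sub ((cSη.sub cBot).sub cI₁) cI₂,
        DivIdent.double_sub (cSη.sub cBot) cI₁,
        DivIdent.double_sub cSη cBot]
  -- split the surface flux double integral
  have hsf : (∫ x₁ in (0:ℝ)..L₁, ∫ x₂ in (0:ℝ)..L₂,
        (f₁ x₁ x₂ (η x₁ x₂) * deriv (fun s => η s x₂) x₁
          + f₂ x₁ x₂ (η x₁ x₂) * deriv (fun s => η x₁ s) x₂))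
      = (∫ x₁ in (0:ℝ)..L₁, ∫ x₂ in (0:ℝ)..L₂,
          f₁ x₁ x₂ (η x₁ x₂) * deriv (fun s => η s x₂) x₁)
        + (∫ x₁ in (0:ℝ)..L₁, ∫ x₂ in (0:ℝ)..L₂,
          f₂ x₁ x₂ (η x₁ x₂) * deriv (fun s => η x₁ s) x₂) :=
    DivIdent.double_add cT₁ cT₂
  -- f₂ identity (FTC in x₂, the inner variable)
  have E4 : ∀ x₁ : ℝ,
      (∫ x₂ in (0:ℝ)..L₂, (f₂ x₁ x₂ (η x₁ x₂) * deriv (fun s => η x₁ s) x₂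
          + ∫ y in (-h)..(η x₁ x₂), deriv (fun s => f₂ x₁ s y) x₂))
      = (∫ y in (-h)..(η x₁ L₂), f₂ x₁ L₂ y) - (∫ y in (-h)..(η x₁ 0), f₂ x₁ 0 y) := by
    intro x₁
    exact DivIdent.ftc_leibniz
      (G := fun x₂ y => f₂ x₁ x₂ y) (G' := fun x₂ y => deriv (fun s => f₂ x₁ s y) x₂)
      (f₂c.comp (continuous_const.prodMk (continuous_fst.prodMk continuous_snd)))
      (cdf₂.comp (continuous_const.prodMk (continuous_fst.prodMk continuous_snd)))
      (fun x y => (DivIdent.hasDerivAt3_2 hf₂ x₁ x y).differentiableAt.hasDerivAt)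
      (β := fun s => η x₁ s) (β' := fun s => deriv (fun t => η x₁ t) s)
      (fun x => (DivIdent.hasDerivAt_right hη x₁ x).differentiableAt.hasDerivAt)
      (ηc.comp (continuous_const.prodMk continuous_id))
      (cdη2.comp (continuous_const.prodMk continuous_id))
      (-h) 0 L₂
  have h2 : (∫ x₁ in (0:ℝ)..L₁, ∫ x₂ in (0:ℝ)..L₂,
        f₂ x₁ x₂ (η x₁ x₂) * deriv (fun s => η x₁ s) x₂)
      + (∫ x₁ in (0:ℝ)..L₁, ∫ x₂ in (0:ℝ)..L₂,
        ∫ y in (-h)..(η x₁ x₂), deriv (fun s => f₂ x₁ s y) x₂)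
      = (∫ x₁ in (0:ℝ)..L₁, ∫ y in (-h)..(η x₁ L₂), f₂ x₁ L₂ y)
        - (∫ x₁ in (0:ℝ)..L₁, ∫ y in (-h)..(η x₁ 0), f₂ x₁ 0 y) := by
    rw [← DivIdent.double_add cT₂ cI₂]
    rw [show (∫ x₁ in (0:ℝ)..L₁, ∫ x₂ in (0:ℝ)..L₂,
        (f₂ x₁ x₂ (η x₁ x₂) * deriv (fun s => η x₁ s) x₂
          + ∫ y in (-h)..(η x₁ x₂), deriv (fun s => f₂ x₁ s y) x₂))
      = ∫ x₁ in (0:ℝ)..L₁, ((∫ y in (-h)..(η x₁ L₂), f₂ x₁ L₂ y)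
          - (∫ y in (-h)..(η x₁ 0), f₂ x₁ 0 y)) from
      intervalIntegral.integral_congr fun x₁ _ => E4 x₁]
    refine intervalIntegral.integral_sub ?_ ?_
    · exact (continuous_parametric_intervalIntegral_of_continuous
        (f := fun x₁ : ℝ => fun y => f₂ x₁ L₂ y)
        (by exact f₂c.comp (continuous_fst.prodMk (continuous_const.prodMk continuous_snd)))
        (ηc.comp (continuous_id.prodMk continuous_const))).intervalIntegrable _ _
    · exact (continuous_parametric_intervalIntegral_of_continuous
        (f := fun x₁ : ℝ => fun y => f₂ x₁ 0 y)
        (by exact f₂c.comp (continuous_fst.prodMk (continuous_const.prodMk continuous_snd)))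
        (ηc.comp (continuous_id.prodMk continuous_const))).intervalIntegrable _ _
  -- f₁ identity (FTC in x₁ after Fubini)
  have E5 : ∀ x₂ : ℝ,
      (∫ x₁ in (0:ℝ)..L₁, (f₁ x₁ x₂ (η x₁ x₂) * deriv (fun s => η s x₂) x₁
          + ∫ y in (-h)..(η x₁ x₂), deriv (fun s => f₁ s x₂ y) x₁))
      = (∫ y in (-h)..(η L₁ x₂), f₁ L₁ x₂ y) - (∫ y in (-h)..(η 0 x₂), f₁ 0 x₂ y) := by
    intro x₂
    exact DivIdent.ftc_leibniz
      (G := fun x₁ y => f₁ x₁ x₂ y) (G' := fun x₁ y => deriv (fun s => f₁ s x₂ y) x₁)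
      (f₁c.comp (continuous_fst.prodMk (continuous_const.prodMk continuous_snd)))
      (cdf₁.comp (continuous_fst.prodMk (continuous_const.prodMk continuous_snd)))
      (fun x y => (DivIdent.hasDerivAt3_1 hf₁ x x₂ y).differentiableAt.hasDerivAt)
      (β := fun s => η s x₂) (β' := fun s => deriv (fun t => η t x₂) s)
      (fun x => (DivIdent.hasDerivAt_left hη x x₂).differentiableAt.hasDerivAt)
      (ηc.comp (continuous_id.prodMk continuous_const))
      (cdη1.comp (continuous_id.prodMk continuous_const))
      (-h) 0 L₁
  have h1 : (∫ x₁ in (0:ℝ)..L₁, ∫ x₂ in (0:ℝ)..L₂,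
        f₁ x₁ x₂ (η x₁ x₂) * deriv (fun s => η s x₂) x₁)
      + (∫ x₁ in (0:ℝ)..L₁, ∫ x₂ in (0:ℝ)..L₂,
        ∫ y in (-h)..(η x₁ x₂), deriv (fun s => f₁ s x₂ y) x₁)
      = (∫ x₂ in (0:ℝ)..L₂, ∫ y in (-h)..(η L₁ x₂), f₁ L₁ x₂ y)
        - (∫ x₂ in (0:ℝ)..L₂, ∫ y in (-h)..(η 0 x₂), f₁ 0 x₂ y) := by
    rw [← DivIdent.double_add cT₁ cI₁]
    rw [DivIdent.integral_swap hL₁.le hL₂.le (cT₁.add cI₁)]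
    rw [show (∫ x₂ in (0:ℝ)..L₂, ∫ x₁ in (0:ℝ)..L₁,
        (f₁ x₁ x₂ (η x₁ x₂) * deriv (fun s => η s x₂) x₁
          + ∫ y in (-h)..(η x₁ x₂), deriv (fun s => f₁ s x₂ y) x₁))
      = ∫ x₂ in (0:ℝ)..L₂, ((∫ y in (-h)..(η L₁ x₂), f₁ L₁ x₂ y)
          - (∫ y in (-h)..(η 0 x₂), f₁ 0 x₂ y)) from
      intervalIntegral.integral_congr fun x₂ _ => E5 x₂]
    refine intervalIntegral.integral_sub ?_ ?_
    · exact (continuous_parametric_intervalIntegral_of_continuous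
        (f := fun x₂ : ℝ => fun y => f₁ L₁ x₂ y)
        (by exact f₁c.comp (continuous_const.prodMk (continuous_fst.prodMk continuous_snd)))
        (ηc.comp (continuous_const.prodMk continuous_id))).intervalIntegrable _ _
    · exact (continuous_parametric_intervalIntegral_of_continuous
        (f := fun x₂ : ℝ => fun y => f₁ 0 x₂ y)
        (by exact f₁c.comp (continuous_const.prodMk (continuous_fst.prodMk continuous_snd)))
        (ηc.comp (continuous_const.prodMk continuous_id))).intervalIntegrable _ _
  rw [hbulk, hsf]
  linarith [h1, h2]
end
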